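/- arXiv:1603.03892 — 7 statements merged into one kernel-verified Lean document; each statement's English description precedes it below -/
import Mathlib

section
/- Let (G, τ) be a locally quasi-convex Hausdorff topological abelian group of finite exponent (i.e., mG = 0 for some positive integer m). Then τ is a linear topology: it admits a neighborhood basis at 0 consisting of open subgroups. -/
open scoped Topology
open Filter

noncomputable section

abbrev Circle1 : Type := AddCircle (1 : ℝ)

def Tpos : Set Circle1 := (fun r : ℝ => (r : Circle1)) '' Set.Icc (-(1/4) : ℝ) (1/4)

variable {G : Type*}

def IsChar [AddCommGroup G] (τ : TopologicalSpace G) (φ : G →+ Circle1) : Prop :=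
  @Continuous G Circle1 τ _ φ

def QuasiConvex [AddCommGroup G] (τ : TopologicalSpace G) (M : Set G) : Prop :=
  ∀ x ∉ M, ∃ φ : G →+ Circle1, IsChar τ φ ∧ (∀ y ∈ M, φ y ∈ Tpos) ∧ φ x ∉ Tpos

def LocallyQuasiConvex [AddCommGroup G] (τ : TopologicalSpace G) : Prop :=
  ∀ U ∈ @nhds G τ 0, ∃ M ∈ @nhds G τ 0, QuasiConvex τ M ∧ M ⊆ U

def Compatible [AddCommGroup G] (τ τ' : TopologicalSpace G) : Prop :=
  ∀ φ : G →+ Circle1, IsChar τ φ ↔ IsChar τ' φ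

def IsMackey [AddCommGroup G] (τ : TopologicalSpace G) : Prop :=
  @IsTopologicalAddGroup G τ _ ∧ LocallyQuasiConvex τ ∧
    ∀ τ' : TopologicalSpace G, @IsTopologicalAddGroup G τ' _ →
      LocallyQuasiConvex τ' → Compatible τ τ' → τ ≤ τ'

def BoundedGroup (G : Type*) [AddCommGroup G] : Prop :=
  ∃ m : ℕ, 0 < m ∧ ∀ x : G, m • x = 0

def Precompact [AddCommGroup G] (τ : TopologicalSpace G) : Prop :=
  ∀ U ∈ @nhds G τ 0, ∃ F : Finset G, ∀ x : G, ∃ f ∈ F, x - f ∈ U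

def LinearTop [AddCommGroup G] (τ : TopologicalSpace G) : Prop :=
  ∀ U ∈ @nhds G τ 0, ∃ H : AddSubgroup G, @IsOpen G τ (H : Set G) ∧ (H : Set G) ⊆ U

def DuallyClosed [AddCommGroup G] (τ : TopologicalSpace G) (H : AddSubgroup G) : Prop :=
  ∀ x : G, x ∉ H → ∃ φ : G →+ Circle1, IsChar τ φ ∧ (∀ h ∈ H, φ h = 0) ∧ φ x ≠ 0

def WeakTop [AddCommGroup G] (τ : TopologicalSpace G) : TopologicalSpace G :=
  ⨅ φ : {φ : G →+ Circle1 // IsChar τ φ}, TopologicalSpace.induced φ.1 inferInstance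

lemma int_abs_lt_one {n : ℤ} (h : |(n:ℝ)| < 1) : n = 0 := by
  have h1 : -1 < (n:ℝ) := by linarith [abs_lt.1 h]
  have h2 : (n:ℝ) < 1 := (abs_lt.1 h).2
  have h1' : (-1 : ℤ) < n := by exact_mod_cast h1
  have h2' : n < 1 := by exact_mod_cast h2
  omega

lemma tpos_nsmul_zero (t : Circle1) (h : ∀ k : ℕ, (k • t) ∈ Tpos) : t = 0 := by
  obtain ⟨s, hs, hst⟩ := h 1
  rw [one_smul] at hst
  by_contra ht
  have hs0 : s ≠ 0 := by
    rintro rfl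
    exact ht (by rw [← hst]; norm_num)
  have hpos : 0 < |s| := abs_pos.2 hs0
  have hsle : |s| ≤ 1/4 := abs_le.2 ⟨by linarith [hs.1], hs.2⟩
  have hex : ∃ k : ℕ, 1/4 < (k : ℝ) * |s| := by
    obtain ⟨k, hk⟩ := exists_nat_gt ((1/4) / |s|)
    exact ⟨k, by rwa [div_lt_iff₀ hpos] at hk⟩
  classical
  set k := Nat.find hex with hkdef
  have hk : 1/4 < (k : ℝ) * |s| := Nat.find_spec hex
  have hk1 : 1 ≤ k := by
    rcases Nat.eq_zero_or_pos k with h0 | h0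
    · exfalso; rw [h0] at hk; norm_num at hk
    · exact h0
  have hkprev : ¬ (1/4 < ((k - 1 : ℕ) : ℝ) * |s|) := Nat.find_min hex (by omega)
  push_neg at hkprev
  have hcast : ((k - 1 : ℕ) : ℝ) = (k : ℝ) - 1 := by
    push_cast [Nat.cast_sub hk1]; ring
  rw [hcast] at hkprev
  have hkub : (k : ℝ) * |s| ≤ 1/2 := by nlinarith
  obtain ⟨u, hu, huk⟩ := h k
  rw [← hst] at huk
  have huk' : (u : Circle1) = ((k : ℕ) • ((s : Circle1))) := huk
  have hcoe : ((k : ℕ) • ((s : Circle1))) = (((k : ℝ) * s : ℝ) : Circle1) := by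
    rw [← AddCircle.coe_nsmul]; congr 1; exact nsmul_eq_mul k s
  rw [hcoe] at huk'
  have hzero : ((u - (k : ℝ) * s : ℝ) : Circle1) = 0 := by
    have : ((u - (k : ℝ) * s : ℝ) : Circle1) = (u : Circle1) - (((k : ℝ) * s : ℝ) : Circle1) :=
      QuotientAddGroup.mk_sub _ u _
    rw [this, huk', sub_self]
  obtain ⟨n, hn⟩ := (AddCircle.coe_eq_zero_iff (1:ℝ)).1 hzero
  have hn' : (n : ℝ) = u - (k : ℝ) * s := by simpa using hn
  have huabs : |u| ≤ 1/4 := abs_le.2 ⟨by linarith [hu.1], hu.2⟩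
  have hks : |(k : ℝ) * s| = (k : ℝ) * |s| := by
    rw [abs_mul, abs_of_nonneg (by positivity : (0:ℝ) ≤ (k:ℝ))]
  have habs : |(n : ℝ)| < 1 := by
    rw [hn']
    calc |u - (k : ℝ) * s| ≤ |u| + |(k : ℝ) * s| := abs_sub u _
      _ ≤ 1/4 + 1/2 := by rw [hks]; linarith
      _ < 1 := by norm_num
  have hn0 : n = 0 := int_abs_lt_one habs
  rw [hn0] at hn'
  have : u = (k : ℝ) * s := by push_cast at hn'; linarith
  rw [this, hks] at huabs
  linarith

theorem stmt0 {G : Type*} [AddCommGroup G] (τ : TopologicalSpace G)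
    (htg : @IsTopologicalAddGroup G τ _) (hT2 : @T2Space G τ)
    (hb : BoundedGroup G) (hlqc : LocallyQuasiConvex τ) : LinearTop τ := by
  letI := τ
  haveI := htg
  obtain ⟨m, hm, hmx⟩ := hb
  intro U hU
  obtain ⟨M, hM, hqc, hMU⟩ := hlqc U hU
  have h0M : (0 : G) ∈ M := mem_of_mem_nhds hM
  set N : AddSubgroup G :=
    { carrier := {x | ∀ φ : G →+ Circle1, IsChar τ φ → (∀ y ∈ M, φ y ∈ Tpos) → φ x = 0}
      zero_mem' := fun φ _ _ => map_zero φ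
      add_mem' := fun ha hb' φ hφ hφM => by
        rw [map_add, ha φ hφ hφM, hb' φ hφ hφM, add_zero]
      neg_mem' := fun ha φ hφ hφM => by
        rw [map_neg, ha φ hφ hφM, neg_zero] } with hN
  have hNM : (N : Set G) ⊆ M := by
    intro x hx
    by_contra hxM
    obtain ⟨φ, hφ, hφM, hφx⟩ := hqc x hxM
    exact hφx (by rw [hx φ hφ hφM]; exact ⟨0, by norm_num, by norm_num⟩)
  have hWN : ∀ j : ℕ, (fun x : G => j • x) ⁻¹' M ∈ @nhds G τ 0 := by
    intro j
    have hc : Continuous fun x : G => j • x := continuous_nsmul j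
    have : (fun x : G => j • x) 0 = 0 := smul_zero j
    exact hc.continuousAt.preimage_mem_nhds (by simpa using hM)
  have hWmem : (⋂ j ∈ Finset.range m, (fun x : G => j • x) ⁻¹' M) ∈ @nhds G τ 0 :=
    (Filter.biInter_finset_mem (Finset.range m)).2 fun j _ => hWN j
  have hWsub : (⋂ j ∈ Finset.range m, (fun x : G => j • x) ⁻¹' M) ⊆ (N : Set G) := by
    intro x hx φ hφ hφM
    refine tpos_nsmul_zero (φ x) fun k => ?_
    have hred : k • x = (k % m) • x := by
      conv_lhs => rw [← Nat.mod_add_div k m]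
      rw [add_nsmul, mul_smul, hmx, add_zero]
    have hmem : (k % m) • x ∈ M := by
      have := Set.mem_iInter₂.1 hx (k % m) (Finset.mem_range.2 (Nat.mod_lt k hm))
      exact this
    rw [← map_nsmul, hred]
    exact hφM _ hmem
  have hNnhds : (N : Set G) ∈ @nhds G τ 0 := Filter.mem_of_superset hWmem hWsub
  exact ⟨N, AddSubgroup.isOpen_of_mem_nhds N hNnhds, fun x hx => hMU (hNM hx)⟩
end
end

section
/- Let (G, τ) be a metrizable, non-discrete, torsion topological abelian group. Then there exists a group homomorphism f : G → ℝ/ℤ which is not continuous. -/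
open scoped Topology
open Filter

noncomputable section

variable {G : Type*}

open Pointwise in
lemma lemA (c : Circle1) (d : ℕ) (hd : 2 ≤ d) :
    ∃ t : Circle1, (d : ℤ) • t = c ∧ (1/4 : ℝ) ≤ ‖t‖ := by
  obtain ⟨r, rfl⟩ := QuotientAddGroup.mk_surjective c
  have hd0 : (0:ℝ) < d := by positivity
  have hd2 : (2:ℝ) ≤ d := by exact_mod_cast hd
  set k : ℤ := ⌈(d:ℝ)/4 - r⌉ with hk
  have hk1 : (d:ℝ)/4 - r ≤ k := Int.le_ceil _
  have hk2 : (k:ℝ) < (d:ℝ)/4 - r + 1 := Int.ceil_lt_add_one _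
  set u : ℝ := (r + k) / d with hu
  have hu1 : (1/4 : ℝ) ≤ u := by rw [hu, le_div_iff₀ hd0]; linarith
  have hu2 : u ≤ (3/4 : ℝ) := by rw [hu, div_le_iff₀ hd0]; linarith
  refine ⟨(u : Circle1), ?_, ?_⟩
  · have : ((d:ℤ) • u : ℝ) = r + k := by
      rw [zsmul_eq_mul]; push_cast; rw [hu, mul_div_cancel₀ _ (ne_of_gt hd0)]
    calc (d:ℤ) • (u : Circle1) = (((d:ℤ) • u : ℝ) : Circle1) := by
          rw [← AddCircle.coe_zsmul]
      _ = ((r + k : ℝ) : Circle1) := by rw [this]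
      _ = (r : Circle1) := by
          rw [AddCircle.coe_add]
          have : ((k : ℝ) : Circle1) = 0 := by
            rw [QuotientAddGroup.eq_zero_iff]
            exact ⟨k, by simp⟩
          rw [this, add_zero]
  · have hnorm : ‖(u : Circle1)‖ = |u - round u| := by
      simpa using AddCircle.norm_eq (p := (1:ℝ)) (x := u)
    rw [hnorm]
    have hr := round_eq u
    rcases lt_or_ge u (1/2 : ℝ) with h | h
    · have : round u = 0 := by
        rw [hr]; apply Int.floor_eq_iff.mpr <;> simp <;> constructor <;> linarith
      rw [this]; rw [abs_of_nonneg (by push_cast; linarith)]; push_cast; linarith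
    · have : round u = 1 := by
        rw [hr]; apply Int.floor_eq_iff |>.mpr; constructor <;> push_cast <;> linarith
      rw [this]; rw [abs_of_nonpos (by push_cast; linarith)]; push_cast; linarith

open Pointwise in
open AddSubgroup in
lemma lemB {G : Type*} [AddCommGroup G]
    (htor : ∀ x : G, ∃ n : ℕ, 0 < n ∧ n • x = 0)
    (H : AddSubgroup G) (φ : H →+ Circle1) (x : G) (hx : x ∉ H) :
    ∃ (K : AddSubgroup G) (ψ : K →+ Circle1), H ≤ K ∧
      (∀ (h : G) (hH : h ∈ H) (hK : h ∈ K), ψ ⟨h, hK⟩ = φ ⟨h, hH⟩) ∧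
      (K : Set G) ⊆ (H : Set G) + (zmultiples x : Set G) ∧
      ∃ hxK : x ∈ K, (1/4 : ℝ) ≤ ‖ψ ⟨x, hxK⟩‖ := by
  set xb : G ⧸ H := QuotientAddGroup.mk x with hxb
  have hfin : IsOfFinAddOrder xb := by
    obtain ⟨n, hn, hnx⟩ := htor x
    exact isOfFinAddOrder_iff_nsmul_eq_zero.mpr
      ⟨n, hn, by rw [hxb, ← QuotientAddGroup.mk_nsmul, hnx]; rfl⟩
  set d : ℕ := addOrderOf xb with hd
  have hd2 : 2 ≤ d := by
    have h0 : d ≠ 0 := (addOrderOf_pos_iff.mpr hfin).ne'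
    have h1 : d ≠ 1 := by
      intro h1
      exact hx ((QuotientAddGroup.eq_zero_iff x).mp
        (AddMonoid.addOrderOf_eq_one_iff.mp h1))
    omega
  have hdx : (d : ℤ) • x ∈ H := by
    have : (d : ℤ) • xb = 0 := by
      exact_mod_cast addOrderOf_nsmul_eq_zero xb
    rw [hxb, ← QuotientAddGroup.mk_zsmul] at this
    exact (QuotientAddGroup.eq_zero_iff _).mp this
  obtain ⟨t, htc, htn⟩ := lemA (φ ⟨(d : ℤ) • x, hdx⟩) d hd2
  set e : H × ℤ →+ G := AddMonoidHom.coprod H.subtype (zmultiplesHom G x) with he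
  set m : H × ℤ →+ Circle1 := AddMonoidHom.coprod φ (zmultiplesHom Circle1 t) with hm
  have hker : ∀ p ∈ e.ker, m p = 0 := by
    rintro ⟨h, k⟩ hp
    have hep : (h : G) + k • x = 0 := hp
    have hkx : k • x ∈ H := by
      have : k • x = -(h : G) := by linear_combination (norm := abel_nf) hep
      rw [this]; exact neg_mem h.2
    have hdvd : (d : ℤ) ∣ k := by
      rw [hd, addOrderOf_dvd_iff_zsmul_eq_zero, hxb, ← QuotientAddGroup.mk_zsmul,
        QuotientAddGroup.eq_zero_iff]
      exact hkx
    obtain ⟨j, rfl⟩ := hdvd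
    have h1 : (h : G) = -(((d:ℤ)*j) • x) := by linear_combination (norm := abel_nf) hep
    have hH : h = -(j • (⟨(d : ℤ) • x, hdx⟩ : H)) := by
      apply Subtype.ext
      push_cast
      rw [h1, smul_smul, mul_comm]
    have hmp : m (h, (d:ℤ)*j) = φ h + ((d:ℤ)*j) • t := rfl
    rw [hmp, hH, map_neg, map_zsmul, mul_comm, mul_smul, htc]
    abel
  set ψ : e.range →+ Circle1 :=
    (QuotientAddGroup.lift e.ker m hker).comp
      (QuotientAddGroup.quotientKerEquivRange e).symm.toAddMonoidHom with hψdef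
  have hψ : ∀ (p : H × ℤ) (hy : e p ∈ e.range), ψ ⟨e p, hy⟩ = m p := by
    intro p hy
    have h1 : (QuotientAddGroup.quotientKerEquivRange e) (QuotientAddGroup.mk p)
        = ⟨e p, hy⟩ := rfl
    have h2 : (QuotientAddGroup.quotientKerEquivRange e).symm ⟨e p, hy⟩
        = QuotientAddGroup.mk p := by
      rw [← h1, AddEquiv.symm_apply_apply]
    rw [hψdef]
    simp only [AddMonoidHom.comp_apply, AddEquiv.coe_toAddMonoidHom, h2]
    rfl
  have hmemH : ∀ h ∈ H, h ∈ e.range := by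
    intro h hh
    exact ⟨(⟨h, hh⟩, 0), by simp [he]⟩
  have hmemx : x ∈ e.range := ⟨(0, 1), by simp [he]⟩
  refine ⟨e.range, ψ, hmemH, ?_, ?_, hmemx, ?_⟩
  · intro h hH hK
    have h2 : (⟨h, hK⟩ : e.range) = ⟨e (⟨h, hH⟩, 0), AddMonoidHom.mem_range.mpr ⟨_, rfl⟩⟩ := by
      apply Subtype.ext; simp [he]
    rw [h2, hψ (⟨h, hH⟩, 0) _]
    simp [hm]
  · rintro y ⟨⟨h, k⟩, rfl⟩
    exact ⟨h, h.2, k • x, mem_zmultiples_iff.mpr ⟨k, rfl⟩, rfl⟩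
  · have h2 : (⟨x, hmemx⟩ : e.range) = ⟨e (0, 1), AddMonoidHom.mem_range.mpr ⟨_, rfl⟩⟩ := by
      apply Subtype.ext; simp [he]
    rw [h2, hψ (0, 1) _]
    simpa [hm] using htn

lemma lemC {G : Type*} [AddCommGroup G] (K : ℕ → AddSubgroup G) (hK : Monotone K)
    (ψ : ∀ n, (K n) →+ Circle1)
    (hcompat : ∀ a b (h : a ≤ b) (y : G) (hy : y ∈ K a), ψ b ⟨y, hK h hy⟩ = ψ a ⟨y, hy⟩) :
    ∃ Φ : (⨆ n, K n : AddSubgroup G) →+ Circle1,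
      ∀ (n : ℕ) (y : G) (hy : y ∈ K n) (hy' : y ∈ ⨆ n, K n), Φ ⟨y, hy'⟩ = ψ n ⟨y, hy⟩ := by
  classical
  set g : G → Circle1 := fun y =>
    if h : ∃ n, y ∈ K n then ψ (Nat.find h) ⟨y, Nat.find_spec h⟩ else 0 with hgdef
  have hg : ∀ (n : ℕ) (y : G) (hy : y ∈ K n), g y = ψ n ⟨y, hy⟩ := by
    intro n y hy
    have h : ∃ n, y ∈ K n := ⟨n, hy⟩
    have h1 := hcompat (Nat.find h) (max (Nat.find h) n) (le_max_left _ _) y (Nat.find_spec h)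
    have h2 := hcompat n (max (Nat.find h) n) (le_max_right _ _) y hy
    rw [hgdef]
    simp only [dif_pos h]
    rw [← h1, ← h2]
  have hmem : ∀ y : G, y ∈ (⨆ n, K n : AddSubgroup G) → ∃ n, y ∈ K n := fun y hy =>
    (AddSubgroup.mem_iSup_of_directed (hK.directed_le)).mp hy
  refine ⟨{ toFun := fun y => g y.1,
            map_zero' := by
              show g (0 : G) = 0
              rw [hg 0 0 (zero_mem _)]; exact map_zero _,
            map_add' := ?_ }, ?_⟩
  · rintro ⟨a, ha⟩ ⟨b, hb⟩
    obtain ⟨na, hna⟩ := hmem a ha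
    obtain ⟨nb, hnb⟩ := hmem b hb
    have haN : a ∈ K (max na nb) := hK (le_max_left _ _) hna
    have hbN : b ∈ K (max na nb) := hK (le_max_right _ _) hnb
    show g (a + b) = g a + g b
    rw [hg (max na nb) a haN, hg (max na nb) b hbN,
      hg (max na nb) (a + b) (add_mem haN hbN), ← map_add]
    rfl
  · intro n y hy hy'
    exact hg n y hy

structure XSt (G : Type*) [AddCommGroup G] where
  K : AddSubgroup G
  fin : (K : Set G).Finite
  ψ : K →+ Circle1

theorem stmt3 {G : Type*} [AddCommGroup G] (τ : TopologicalSpace G)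
    (htg : @IsTopologicalAddGroup G τ _) (hmet : @TopologicalSpace.MetrizableSpace G τ)
    (hnd : τ ≠ ⊥) (htor : ∀ x : G, ∃ n : ℕ, 0 < n ∧ n • x = 0) :
    ∃ f : G →+ Circle1, ¬ @Continuous G Circle1 τ _ f := by
  letI := τ
  haveI := htg
  haveI := hmet
  letI : MetricSpace G := TopologicalSpace.metrizableSpaceMetric G
  -- every neighborhood of 0 escapes any finite set
  have key : ∀ (S : Set G), S.Finite → ∀ U ∈ 𝓝 (0 : G), ∃ y ∈ U, y ∉ S := by
    intro S hS U hU
    by_contra hcon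
    push_neg at hcon
    have hT : (S \ {0} : Set G).Finite := hS.subset Set.diff_subset
    have hV : U ∩ (S \ {0})ᶜ ∈ 𝓝 (0 : G) :=
      Filter.inter_mem hU (hT.isClosed.isOpen_compl.mem_nhds (by simp))
    have hsub : U ∩ (S \ {0})ᶜ ⊆ {0} := by
      rintro y ⟨hyU, hyT⟩
      have hyS := hcon y hyU
      simp only [Set.mem_compl_iff, Set.mem_diff, Set.mem_singleton_iff, not_and, not_not] at hyT
      exact hyT hyS
    have h0 : ({0} : Set G) ∈ 𝓝 (0 : G) := Filter.mem_of_superset hV hsub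
    obtain ⟨t, hts, hto, h0t⟩ := mem_nhds_iff.mp h0
    have : IsOpen ({0} : Set G) := by
      have : t = {0} := Set.Subset.antisymm hts (Set.singleton_subset_iff.mpr h0t)
      rwa [this] at hto
    haveI : DiscreteTopology G := discreteTopology_iff_isOpen_singleton_zero.mpr this
    exact hnd DiscreteTopology.eq_bot
  -- antitone basis of neighborhoods of 0
  obtain ⟨B, hB⟩ := (𝓝 (0 : G)).exists_antitone_basis
  -- the recursive step
  have hstep : ∀ (s : XSt G) (n : ℕ), ∃ (s' : XSt G) (x : G),
      s.K ≤ s'.K ∧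
      (∀ (h : G) (hH : h ∈ s.K) (hK : h ∈ s'.K), s'.ψ ⟨h, hK⟩ = s.ψ ⟨h, hH⟩) ∧
      x ∈ B n ∧ ∃ hxK : x ∈ s'.K, (1/4 : ℝ) ≤ ‖s'.ψ ⟨x, hxK⟩‖ := by
    intro s n
    obtain ⟨x, hxB, hxK⟩ := key s.K s.fin (B n) (hB.mem n)
    obtain ⟨K', ψ', hle, hext, hKsub, hxK', hnorm⟩ := lemB htor s.K s.ψ x hxK
    have hxfin : IsOfFinAddOrder x := by
      obtain ⟨m, hm, hmx⟩ := htor x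
      exact isOfFinAddOrder_iff_nsmul_eq_zero.mpr ⟨m, hm, hmx⟩
    have hfin' : (K' : Set G).Finite :=
      (s.fin.add hxfin.finite_zmultiples).subset hKsub
    exact ⟨⟨K', hfin', ψ'⟩, x, hle, hext, hxB, hxK', hnorm⟩
  choose F X hle hext hxB hrest using hstep
  -- the recursively defined chain
  set seq : ℕ → XSt G := fun n => Nat.rec ⟨⊥, by simp, 0⟩ (fun n s => F s n) n with hseqdef
  have hseq : ∀ n, seq (n + 1) = F (seq n) n := fun n => rfl
  set Kc : ℕ → AddSubgroup G := fun n => (seq n).K with hKc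
  set x : ℕ → G := fun n => X (seq n) n with hx
  have hmono : Monotone Kc := by
    apply monotone_nat_of_le_succ
    intro n
    rw [hKc]; simp only [hseq n]
    exact hle (seq n) n
  have hcompat : ∀ a b (h : a ≤ b) (y : G) (hy : y ∈ Kc a),
      (seq b).ψ ⟨y, hmono h hy⟩ = (seq a).ψ ⟨y, hy⟩ := by
    intro a b h
    induction b, h using Nat.le_induction with
    | base => intro y hy; rfl
    | succ b hab ih =>
      intro y hy
      have hyb : y ∈ Kc b := hmono hab hy
      have h1 := hext (seq b) b y hyb (hmono (Nat.le_succ_of_le hab) hy)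
      calc (seq (b + 1)).ψ ⟨y, hmono (Nat.le_succ_of_le hab) hy⟩
          = (seq b).ψ ⟨y, hyb⟩ := h1
        _ = (seq a).ψ ⟨y, hy⟩ := ih y hy
  obtain ⟨Φ, hΦ⟩ := lemC Kc hmono (fun n => (seq n).ψ) hcompat
  -- extend to all of G using divisibility of the circle
  obtain ⟨f, hf⟩ := Module.Baer.extension_property_addMonoidHom
    (Module.Baer.of_divisible Circle1) (⨆ n, Kc n : AddSubgroup G).subtype
    (AddSubgroup.subtype_injective _) Φ
  refine ⟨f, fun hcont => ?_⟩
  -- the chosen points and the norm bound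
  have hxmem : ∀ n, ∃ hm : x n ∈ Kc (n + 1), (1/4 : ℝ) ≤ ‖(seq (n + 1)).ψ ⟨x n, hm⟩‖ := by
    intro n
    have := hrest (seq n) n
    rw [← hseq n] at this
    exact this
  have hnormf : ∀ n, (1/4 : ℝ) ≤ ‖f (x n)‖ := by
    intro n
    obtain ⟨hm, hnorm⟩ := hxmem n
    have hmem' : x n ∈ (⨆ n, Kc n : AddSubgroup G) :=
      (le_iSup Kc (n + 1)) hm
    have h1 : f (x n) = Φ ⟨x n, hmem'⟩ := DFunLike.congr_fun hf ⟨x n, hmem'⟩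
    rw [h1, hΦ (n + 1) (x n) hm hmem']
    exact hnorm
  -- contradiction with continuity
  have hf0 : f 0 = 0 := map_zero f
  have htend : Filter.Tendsto f (𝓝 (0 : G)) (𝓝 (0 : Circle1)) := by
    have := hcont.tendsto 0
    rwa [hf0] at this
  have hball : f ⁻¹' (Metric.ball 0 (1/4)) ∈ 𝓝 (0 : G) :=
    htend (Metric.ball_mem_nhds 0 (by norm_num))
  obtain ⟨i, -, hiB⟩ := hB.1.mem_iff.mp hball
  have := hiB (hxB (seq i) i)
  rw [Set.mem_preimage, Metric.mem_ball, dist_zero_right] at this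
  exact absurd (hnormf i) (by rw [hx]; push_neg; exact this)
end
end

section
/- Let G be an abelian group of finite exponent and τ a metrizable locally quasi-convex group topology on G. Then τ is the Mackey topology: every locally quasi-convex group topology τ' on G having the same continuous characters as τ satisfies τ' ⊆ τ. -/
open scoped Topology
open Filter

noncomputable section

variable {G : Type*}

lemma zero_mem_Tpos : (0 : Circle1) ∈ Tpos :=
  ⟨0, by constructor <;> norm_num, by norm_num⟩

lemma coe_notin_Tpos {t : ℝ} (h1 : 1/4 < t) (h2 : t ≤ 1/2) : ((t : ℝ) : Circle1) ∉ Tpos := by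
  rintro ⟨s, hs, heq⟩
  have heq' : (s : Circle1) = ((t : ℝ) : Circle1) := heq
  have : ((t - s : ℝ) : Circle1) = 0 := by
    rw [AddCircle.coe_sub, heq', sub_self]
  obtain ⟨n, hn⟩ := (AddCircle.coe_eq_zero_iff _).mp this
  rw [zsmul_eq_mul, mul_one] at hn
  obtain ⟨hs1, hs2⟩ := hs
  have hlow : (0 : ℝ) < n := by rw [hn]; linarith
  have hhigh : (n : ℝ) < 1 := by rw [hn]; linarith
  have : (0 : ℤ) < n := by exact_mod_cast hlow
  have : (n : ℤ) < 1 := by exact_mod_cast hhigh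
  omega

lemma aux_real {r : ℝ} (h0 : 0 < r) (h2 : r ≤ 1/2) :
    ∃ k : ℕ, ((k * r : ℝ) : Circle1) ∉ Tpos := by
  rcases le_or_gt r (1/4) with hr | hr
  · have hex : ∃ k : ℕ, 1/4 < k * r := by
      obtain ⟨k, hk⟩ := exists_nat_gt ((1/4) / r)
      exact ⟨k, by rwa [div_lt_iff₀ h0] at hk⟩
    classical
    set k := Nat.find hex with hk
    have hklt : 1/4 < k * r := Nat.find_spec hex
    have hkpos : k ≠ 0 := by
      intro h
      rw [h] at hklt; norm_num at hklt
    have hprev : ¬ (1/4 < (k - 1 : ℕ) * r) := Nat.find_min hex (by omega)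
    push_neg at hprev
    have hcast : ((k - 1 : ℕ) : ℝ) = (k : ℝ) - 1 := by
      have : 1 ≤ k := Nat.one_le_iff_ne_zero.mpr hkpos
      push_cast [this]; ring
    have hle : (k : ℝ) * r ≤ 1/2 := by
      have : ((k : ℝ) - 1) * r ≤ 1/4 := by rw [← hcast]; exact hprev
      nlinarith
    exact ⟨k, coe_notin_Tpos hklt hle⟩
  · refine ⟨1, ?_⟩
    have : ((1 : ℕ) : ℝ) * r = r := by norm_num
    rw [this]
    exact coe_notin_Tpos hr h2

lemma eq_zero_of_forall_zsmul_mem_Tpos {c : Circle1} (h : ∀ j : ℤ, j • c ∈ Tpos) : c = 0 := by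
  by_contra hc
  obtain ⟨s, rfl⟩ : ∃ s : ℝ, (s : Circle1) = c := by
    exact ⟨Quotient.out c, Quotient.out_eq c⟩
  set r : ℝ := s - round s with hrdef
  have hcr : ((r : ℝ) : Circle1) = (s : Circle1) := by
    rw [hrdef, AddCircle.coe_sub]
    have : ((round s : ℝ) : Circle1) = 0 := by
      rw [AddCircle.coe_eq_zero_iff]
      exact ⟨round s, by rw [zsmul_eq_mul, mul_one]⟩
    rw [this, sub_zero]
  have habs : |r| ≤ 1/2 := abs_sub_round s
  have hrne : r ≠ 0 := by
    intro h0
    rw [h0] at hcr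
    exact hc (by rw [← hcr]; norm_num)
  have key : ∀ t : ℝ, 0 < t → t ≤ 1/2 → (∀ j : ℤ, j • ((t : ℝ) : Circle1) ∈ Tpos) → False := by
    intro t ht1 ht2 hall
    obtain ⟨k, hk⟩ := aux_real ht1 ht2
    apply hk
    have : ((k * t : ℝ) : Circle1) = (k : ℤ) • ((t : ℝ) : Circle1) := by
      rw [← AddCircle.coe_zsmul, zsmul_eq_mul]
      norm_num
    rw [this]
    exact hall k
  rcases lt_or_gt_of_ne hrne with hneg | hpos
  · refine key (-r) (by linarith) (by rw [abs_le] at habs; linarith) ?_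
    intro j
    have : ((-r : ℝ) : Circle1) = - ((r : ℝ) : Circle1) := AddCircle.coe_neg _
    rw [this, hcr, smul_neg, ← neg_zsmul]
    exact h (-j)
  · refine key r hpos (by rw [abs_le] at habs; linarith) ?_
    intro j
    rw [hcr]; exact h j

lemma exists_extension_char [AddCommGroup G] (A : AddSubgroup G) (f : ↥A →+ Circle1) :
    ∃ F : G →+ Circle1, ∀ a : ↥A, F a = f a := by
  obtain ⟨F, hF⟩ := (Module.Baer.of_divisible Circle1).extension_property_addMonoidHom
    A.subtype Subtype.coe_injective f
  exact ⟨F, fun a => by rw [← hF]; rfl⟩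

def ratToCircle : AddCircle (1 : ℚ) →+ Circle1 :=
  QuotientAddGroup.map _ _ (Rat.castHom ℝ).toAddMonoidHom (by
    rintro x ⟨n, hn⟩
    exact ⟨n, by simp only [← hn]; push_cast; simp⟩)

lemma ratToCircle_ne_zero {x : AddCircle (1 : ℚ)} (hx : x ≠ 0) : ratToCircle x ≠ 0 := by
  obtain ⟨q, rfl⟩ : ∃ q : ℚ, (q : AddCircle (1:ℚ)) = x := ⟨Quotient.out x, Quotient.out_eq x⟩
  intro h
  apply hx
  have hq : ratToCircle (q : AddCircle (1:ℚ)) = ((q : ℝ) : Circle1) := rfl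
  rw [hq, AddCircle.coe_eq_zero_iff] at h
  obtain ⟨n, hn⟩ := h
  rw [AddCircle.coe_eq_zero_iff]
  refine ⟨n, ?_⟩
  rw [zsmul_eq_mul, mul_one] at hn ⊢
  exact_mod_cast hn

lemma exists_vanishing_char [AddCommGroup G] {A : AddSubgroup G} {a : G} (ha : a ∉ A) :
    ∃ F : G →+ Circle1, (∀ x ∈ A, F x = 0) ∧ F a ≠ 0 := by
  have hne : (QuotientAddGroup.mk a : G ⧸ A) ≠ 0 := by
    simpa [QuotientAddGroup.eq_zero_iff] using ha
  obtain ⟨c, hc⟩ := CharacterModule.exists_character_apply_ne_zero_of_ne_zero hne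
  refine ⟨ratToCircle.comp ((c : G ⧸ A →+ AddCircle (1:ℚ)).comp
    (QuotientAddGroup.mk' A)), fun x hx => ?_, ?_⟩
  · have h0 : ((x : G ⧸ A)) = 0 := (QuotientAddGroup.eq_zero_iff x).mpr hx
    have : (c : G ⧸ A →+ AddCircle (1:ℚ)) ((QuotientAddGroup.mk' A) x) = 0 := by
      have : ((QuotientAddGroup.mk' A) x) = (0 : G ⧸ A) := h0
      rw [this, map_zero]
    exact (congrArg ratToCircle this).trans (map_zero _)
  · exact fun h => ratToCircle_ne_zero hc h

/-- Stage data for the recursive construction. -/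
structure Stage (G : Type*) [AddCommGroup G] (H : AddSubgroup G) (x : ℕ → G) where
  n : ℕ
  S : AddSubgroup G
  χ : G →+ Circle1
  hHS : H ≤ S
  hfin : ∀ a : G, {k : ℕ | x k - a ∈ S}.Finite
  hχH : ∀ h ∈ H, χ h = 0

lemma zsmul_reduce [AddCommGroup G] {m : ℕ} (hm : 0 < m) (hbd : ∀ g : G, m • g = 0) (j : ℤ) (y : G) :
    ∃ r : ℕ, r < m ∧ j • y = (r : ℤ) • y := by
  refine ⟨(j % m).toNat, ?_, ?_⟩
  · have h1 : j % m < m := Int.emod_lt_of_pos j (by exact_mod_cast hm)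
    have h2 : 0 ≤ j % m := Int.emod_nonneg j (by exact_mod_cast hm.ne')
    omega
  · have h2 : 0 ≤ j % m := Int.emod_nonneg j (by exact_mod_cast hm.ne')
    have hcast : (((j % m).toNat : ℤ)) = j % m := Int.toNat_of_nonneg h2
    rw [hcast]
    have : j = m * (j / m) + j % m := (Int.mul_ediv_add_emod j m).symm
    calc j • y = (m * (j / m) + j % m) • y := by rw [← this]
    _ = (j / m) • ((m : ℤ) • y) + (j % m) • y := by
        rw [add_zsmul, mul_comm, mul_zsmul]
    _ = (j % m) • y := by
        rw [show ((m : ℤ) • y) = (0 : G) by rw [natCast_zsmul]; exact hbd y,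
          smul_zero, zero_add]

lemma step_ex [AddCommGroup G] {m : ℕ} (hm : 0 < m) (hbd : ∀ g : G, m • g = 0) {H : AddSubgroup G} {x : ℕ → G}
    (p : Stage G H x) :
    ∃ q : Stage G H x, p.n < q.n ∧ p.S ≤ q.S ∧ x q.n ∈ q.S ∧
      (∀ g ∈ p.S, q.χ g = p.χ g) ∧ q.χ (x q.n) ≠ 0 := by
  classical
  -- find the next index
  have hfin0 : {k : ℕ | x k ∈ p.S}.Finite := by
    have := p.hfin 0
    simpa using this
  obtain ⟨n', hn'⟩ := ((Set.Iic p.n).toFinite.union hfin0).infinite_compl.nonempty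
  simp only [Set.mem_compl_iff, Set.mem_union, Set.mem_Iic, Set.mem_setOf_eq, not_or,
    not_le] at hn'
  obtain ⟨hn'gt, hn'S⟩ := hn'
  set y := x n' with hy
  obtain ⟨θ, hθS, hθy⟩ := exists_vanishing_char (A := p.S) (a := y) hn'S
  set χ' : G →+ Circle1 := if p.χ y = 0 then p.χ + θ else p.χ with hχ'
  set S' : AddSubgroup G := p.S ⊔ AddSubgroup.zmultiples y with hS'
  have hfin' : ∀ a : G, {k : ℕ | x k - a ∈ S'}.Finite := by
    intro a
    refine Set.Finite.subset (Set.Finite.biUnion (Finset.range m).finite_toSet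
      (fun r _ => p.hfin (a + (r : ℤ) • y))) ?_
    intro k hk
    simp only [Set.mem_setOf_eq, hS', AddSubgroup.mem_sup] at hk
    obtain ⟨s, hs, t, ht, hst⟩ := hk
    obtain ⟨j, hj⟩ := AddSubgroup.mem_zmultiples_iff.mp ht
    obtain ⟨r, hrm, hr⟩ := zsmul_reduce hm hbd j y
    simp only [Set.mem_iUnion, Finset.coe_range, Set.mem_Iio]
    refine ⟨r, hrm, ?_⟩
    simp only [Set.mem_setOf_eq]
    have hseq : s = x k - a - t := by rw [← hst]; abel
    have : x k - (a + (r : ℤ) • y) = s := by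
      rw [← hr, hj, hseq]; abel
    rw [this]; exact hs
  have hagree : ∀ g ∈ p.S, χ' g = p.χ g := by
    intro g hg
    rw [hχ']
    split_ifs with h
    · simp [hθS g hg]
    · rfl
  have hχ'y : χ' y ≠ 0 := by
    rw [hχ']
    split_ifs with h
    · simpa [h] using hθy
    · exact h
  refine ⟨⟨n', S', χ', le_trans p.hHS le_sup_left, hfin', ?_⟩, hn'gt, le_sup_left, ?_, hagree,
    hχ'y⟩
  · intro h hh
    rw [hagree h (p.hHS hh)]
    exact p.hχH h hh
  · exact AddSubgroup.mem_sup_right (AddSubgroup.mem_zmultiples y)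

lemma exists_char_vanishing_nonzero_infinitely [AddCommGroup G] {m : ℕ} (hm : 0 < m)
    (hbd : ∀ g : G, m • g = 0) (H : AddSubgroup G) (x : ℕ → G) (hx : ∀ n, x n ∉ H) :
    ∃ χ : G →+ Circle1, (∀ h ∈ H, χ h = 0) ∧ ∀ N : ℕ, ∃ n, N ≤ n ∧ χ (x n) ≠ 0 := by
  classical
  by_cases hcase : ∃ a : G, {n : ℕ | x n - a ∈ H}.Infinite
  · obtain ⟨a, ha⟩ := hcase
    have haH : a ∉ H := by
      obtain ⟨n, hn⟩ := ha.nonempty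
      intro h
      apply hx n
      have hmem : x n - a ∈ H := hn
      have : x n = (x n - a) + a := by abel
      rw [this]
      exact add_mem hmem h
    obtain ⟨F, hF0, hFa⟩ := exists_vanishing_char haH
    refine ⟨F, hF0, fun N => ?_⟩
    obtain ⟨n, hn⟩ := (ha.diff (Set.finite_Iio N)).nonempty
    simp only [Set.mem_diff, Set.mem_setOf_eq, Set.mem_Iio, not_lt] at hn
    refine ⟨n, hn.2, ?_⟩
    have : F (x n) = F (x n - a) + F a := by rw [← map_add]; congr 1; abel
    rw [this, hF0 _ hn.1, zero_add]
    exact hFa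
  · push_neg at hcase
    -- recursive construction
    have p0 : Stage G H x := ⟨0, H, 0, le_refl _, fun a => hcase a,
      fun _ _ => rfl⟩
    let seq : ℕ → Stage G H x := fun k => Nat.rec p0
      (fun _ p => Classical.choose (step_ex hm hbd p)) k
    have hstep : ∀ k, seq (k+1) = Classical.choose (step_ex hm hbd (seq k)) := fun _ => rfl
    have hspec : ∀ k, (seq k).n < (seq (k+1)).n ∧ (seq k).S ≤ (seq (k+1)).S ∧
        x (seq (k+1)).n ∈ (seq (k+1)).S ∧
        (∀ g ∈ (seq k).S, (seq (k+1)).χ g = (seq k).χ g) ∧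
        (seq (k+1)).χ (x (seq (k+1)).n) ≠ 0 := by
      intro k
      rw [hstep k]
      exact Classical.choose_spec (step_ex hm hbd (seq k))
    have hmono : ∀ {k l : ℕ}, k ≤ l → (seq k).S ≤ (seq l).S := by
      intro k l hkl
      induction l, hkl using Nat.le_induction with
      | base => exact le_refl _
      | succ l hkl ih => exact le_trans ih (hspec l).2.1
    have hagree : ∀ {k l : ℕ}, k ≤ l → ∀ g ∈ (seq k).S, (seq l).χ g = (seq k).χ g := by
      intro k l hkl
      induction l, hkl using Nat.le_induction with
      | base => exact fun g _ => rfl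
      | succ l hkl ih =>
          intro g hg
          rw [(hspec l).2.2.2.1 g (hmono hkl hg)]
          exact ih g hg
    have hnmono : StrictMono (fun k => (seq k).n) :=
      strictMono_nat_of_lt_succ (fun k => (hspec k).1)
    -- the limit subgroup
    set A : AddSubgroup G := ⨆ k, (seq k).S with hA
    have hdir : Directed (· ≤ ·) (fun k => (seq k).S) :=
      (fun k l => ⟨max k l, hmono (le_max_left k l), hmono (le_max_right k l)⟩)
    have hmemA : ∀ g : ↥A, ∃ k, (g : G) ∈ (seq k).S := by
      intro g
      exact (AddSubgroup.mem_iSup_of_directed hdir).mp g.2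
    choose idx hidx using hmemA
    have hval : ∀ (g : ↥A) (l : ℕ), idx g ≤ l → (seq l).χ g = (seq (idx g)).χ g :=
      fun g l hl => hagree hl _ (hidx g)
    set f0 : ↥A →+ Circle1 := AddMonoidHom.mk' (fun g => (seq (idx g)).χ g) (by
      intro g h
      show (seq (idx (g + h))).χ ((g + h : ↥A) : G) =
        (seq (idx g)).χ (g : G) + (seq (idx h)).χ (h : G)
      set l := max (idx (g + h)) (max (idx g) (idx h)) with hl
      have hco : ((g + h : ↥A) : G) = (g : G) + (h : G) := rfl
      have h1 : (seq (idx (g+h))).χ ((g + h : ↥A) : G) = (seq l).χ ((g + h : ↥A) : G) :=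
        (hval (g+h) l (le_max_left _ _)).symm
      rw [h1, hco, map_add, hval g l (le_trans (le_max_left _ _) (le_max_right _ _)),
        hval h l (le_trans (le_max_right _ _) (le_max_right _ _))]) with hf0
    obtain ⟨χ, hχ⟩ := exists_extension_char A f0
    have hHA : H ≤ A := le_trans (seq 0).hHS (le_iSup (fun k => (seq k).S) 0)
    refine ⟨χ, ?_, ?_⟩
    · intro h hh
      have : χ h = f0 ⟨h, hHA hh⟩ := hχ ⟨h, hHA hh⟩
      rw [this, hf0]
      simp only [AddMonoidHom.mk'_apply]
      exact (seq (idx ⟨h, hHA hh⟩)).hχH h hh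
    · intro N
      set g : G := x (seq (N+1)).n with hg
      have hgS : g ∈ (seq (N+1)).S := (hspec N).2.2.1
      have hgA : g ∈ A := (le_iSup (fun k => (seq k).S) (N+1)) hgS
      refine ⟨(seq (N+1)).n, le_trans (Nat.le_succ N) (hnmono.le_apply), ?_⟩
      have h1 : χ g = f0 ⟨g, hgA⟩ := hχ ⟨g, hgA⟩
      rw [h1, hf0]
      simp only [AddMonoidHom.mk'_apply]
      set k' := idx ⟨g, hgA⟩ with hk'
      set l := max k' (N+1) with hl
      have h2 : (seq k').χ g = (seq l).χ g := (hagree (le_max_left _ _) g (hidx ⟨g, hgA⟩)).symm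
      have h3 : (seq l).χ g = (seq (N+1)).χ g := hagree (le_max_right _ _) g hgS
      rw [h2, h3]
      exact (hspec N).2.2.2.2

theorem stmt5 {G : Type*} [AddCommGroup G] (hb : BoundedGroup G) (τ : TopologicalSpace G)
    (htg : @IsTopologicalAddGroup G τ _) (hmet : @TopologicalSpace.MetrizableSpace G τ)
    (hlqc : LocallyQuasiConvex τ) :
    ∀ τ' : TopologicalSpace G, @IsTopologicalAddGroup G τ' _ → LocallyQuasiConvex τ' →
      Compatible τ τ' → τ ≤ τ' := by
  classical
  obtain ⟨m, hm, hbd⟩ := hb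
  intro τ' htg' hlqc' hcomp
  -- reduce to neighborhoods of 0
  suffices key : ∀ U ∈ @nhds G τ' 0, U ∈ @nhds G τ 0 by
    rw [← @continuous_id_iff_le G τ τ']
    have hcadd : @ContinuousAdd G τ' _ := htg'.toContinuousAdd
    have h : @Continuous G G τ τ' (AddMonoidHom.id G) := by
      refine @continuous_of_continuousAt_zero G τ _ htg G (G →+ G) _ τ' hcadd _ _
        (AddMonoidHom.id G) ?_
      unfold ContinuousAt
      have h0 : (AddMonoidHom.id G) (0 : G) = (0 : G) := rfl
      rw [h0]
      exact fun U hU => key U hU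
    exact h
  intro U hU
  obtain ⟨M, hM, hMqc, hMU⟩ := hlqc' U hU
  -- the subgroup of M
  set SH : AddSubgroup G :=
    { carrier := {z : G | ∀ φ : G →+ Circle1, IsChar τ' φ → (∀ y ∈ M, φ y ∈ Tpos) → φ z = 0}
      zero_mem' := fun φ _ _ => map_zero φ
      add_mem' := fun {a b} ha hb φ h1 h2 => by
        rw [map_add, ha φ h1 h2, hb φ h1 h2, add_zero]
      neg_mem' := fun {a} ha φ h1 h2 => by rw [map_neg, ha φ h1 h2, neg_zero] } with hSH
  have hchar : ∀ z : G, z ∈ SH ↔ ∀ j : ℤ, j • z ∈ M := by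
    intro z
    constructor
    · intro hz j
      by_contra hjz
      obtain ⟨φ, hφ, hφM, hφj⟩ := hMqc _ hjz
      apply hφj
      have h0 : φ z = 0 := hz φ hφ hφM
      rw [map_zsmul, h0, smul_zero]
      exact zero_mem_Tpos
    · intro hz φ hφ hφM
      refine eq_zero_of_forall_zsmul_mem_Tpos (fun j => ?_)
      rw [← map_zsmul]
      exact hφM _ (hz j)
  -- SH is a τ'-neighborhood of 0
  have hSHnhds : (SH : Set G) ∈ @nhds G τ' 0 := by
    have hsub : (⋂ r ∈ Set.Iio m, (fun z : G => (r : ℤ) • z) ⁻¹' M) ⊆ (SH : Set G) := by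
      intro z hz
      rw [SetLike.mem_coe, hchar z]
      intro j
      obtain ⟨r, hrm, hr⟩ := zsmul_reduce hm hbd j z
      rw [hr]
      exact Set.mem_iInter₂.mp hz r hrm
    refine Filter.mem_of_superset ((Filter.biInter_mem (Set.finite_Iio m)).mpr fun r _ => ?_) hsub
    have hcont : @Continuous G G τ' τ' (fun z : G => (r : ℤ) • z) := @continuous_zsmul G τ' _ _ r
    refine @ContinuousAt.preimage_mem_nhds G G τ' τ' _ 0 M
      (@Continuous.continuousAt G G τ' τ' _ _ hcont) ?_
    rw [show ((r : ℤ) • (0 : G)) = (0 : G) from smul_zero _]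
    exact hM
  have hSHM : (SH : Set G) ⊆ M := fun z hz => by
    have := (hchar z).mp hz 1
    rwa [one_zsmul] at this
  by_cases hτnhds : (SH : Set G) ∈ @nhds G τ 0
  · exact Filter.mem_of_superset hτnhds (le_trans hSHM hMU)
  -- otherwise build a contradiction
  exfalso
  haveI := hmet
  haveI : @TopologicalSpace.PseudoMetrizableSpace G τ :=
    @TopologicalSpace.MetrizableSpace.toPseudoMetrizableSpace G τ hmet
  haveI : @FirstCountableTopology G τ :=
    @TopologicalSpace.PseudoMetrizableSpace.firstCountableTopology G τ _
  haveI : (@nhds G τ 0).IsCountablyGenerated :=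
    @FirstCountableTopology.nhds_generated_countable G τ _ 0
  obtain ⟨b, hbas⟩ := (@nhds G τ 0).exists_antitone_basis
  have hnotsub : ∀ k : ℕ, ¬ (b k ⊆ (SH : Set G)) := by
    intro k hk
    exact hτnhds (Filter.mem_of_superset (hbas.mem k) hk)
  have hex : ∀ k : ℕ, ∃ z : G, z ∈ b k ∧ z ∉ SH := by
    intro k
    obtain ⟨z, hz1, hz2⟩ := Set.not_subset.mp (hnotsub k)
    exact ⟨z, hz1, hz2⟩
  choose x hxb hxSH using hex
  have hxt : @Filter.Tendsto ℕ G x atTop (@nhds G τ 0) := hbas.tendsto hxb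
  obtain ⟨χ, hχSH, hχne⟩ := exists_char_vanishing_nonzero_infinitely hm hbd SH x hxSH
  -- χ is τ'-continuous
  have hχτ' : IsChar τ' χ := by
    refine @continuous_of_continuousAt_zero G τ' _ htg' Circle1 (G →+ Circle1) _ _ _ _ _ χ ?_
    unfold ContinuousAt
    rw [show χ (0 : G) = 0 from map_zero χ]
    intro W hW
    rw [Filter.mem_map]
    refine Filter.mem_of_superset hSHnhds ?_
    intro z hz
    simp only [Set.mem_preimage]
    rw [hχSH z hz]
    exact mem_of_mem_nhds hW
  have hχτ : IsChar τ χ := (hcomp χ).mpr hχτ'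
  -- contradiction via torsion
  have hconv : Filter.Tendsto (fun n => χ (x n)) atTop (𝓝 (0 : Circle1)) := by
    have := (@Continuous.tendsto G Circle1 τ _ χ hχτ 0).comp hxt
    rwa [show χ (0:G) = 0 from map_zero χ] at this
  set V : Set Circle1 := (fun r : ℝ => (r : Circle1)) '' Set.Ioo (-(1/(2*m))) (1/(2*m)) with hV
  have hVopen : IsOpen V := by
    have : IsOpenMap ((↑) : ℝ → Circle1) := QuotientAddGroup.isOpenMap_coe
    exact this _ isOpen_Ioo
  have hmR : (0 : ℝ) < m := by exact_mod_cast hm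
  have hpos : (0 : ℝ) < 1/(2*m) := by positivity
  have hV0 : (0 : Circle1) ∈ V := ⟨0, ⟨by linarith, by linarith⟩, by norm_num⟩
  have hVmem : V ∈ 𝓝 (0 : Circle1) := hVopen.mem_nhds hV0
  obtain ⟨N, hN⟩ := (Filter.tendsto_atTop'.mp hconv) V hVmem
  obtain ⟨n, hnN, hnne⟩ := hχne N
  apply hnne
  -- χ (x n) is m-torsion and in V, hence 0
  obtain ⟨r, hr, hrc⟩ := hN n hnN
  have htor : m • χ (x n) = 0 := by rw [← map_nsmul, hbd, map_zero]
  rw [← hrc] at htor ⊢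
  rw [show ((m : ℕ) • ((r : ℝ) : Circle1)) = ((m * r : ℝ) : Circle1) by
    rw [← AddCircle.coe_nsmul]; norm_num, AddCircle.coe_eq_zero_iff] at htor
  obtain ⟨nn, hnn⟩ := htor
  rw [zsmul_eq_mul, mul_one] at hnn
  have hrbound : |r| < 1/(2*m) := by
    rw [abs_lt]; exact ⟨hr.1, hr.2⟩
  have : |(nn : ℝ)| < 1/2 := by
    rw [hnn, abs_mul, Nat.abs_cast]
    calc (m : ℝ) * |r| < m * (1/(2*m)) := by
          exact mul_lt_mul_of_pos_left hrbound hmR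
    _ = 1/2 := by field_simp
  have hnn0 : nn = 0 := by
    by_contra h
    have : (1 : ℤ) ≤ |nn| := Int.one_le_abs h
    have h1 : (1 : ℝ) ≤ |(nn : ℝ)| := by exact_mod_cast this
    linarith
  have hr0 : r = 0 := by
    have h' : (m : ℝ) * r = 0 := by rw [← hnn, hnn0]; norm_num
    rcases mul_eq_zero.mp h' with h | h
    · exact absurd h (by exact_mod_cast hm.ne')
    · exact h
  rw [hr0]
  show ((0 : ℝ) : Circle1) = 0
  norm_num
end
end

section
/- Let (G, τ) be a topological abelian group and H an open subgroup. If τ is the Mackey topology on G (the finest locally quasi-convex topology among those with the same continuous characters), then the induced topology τ|_H is the Mackey topology on H. -/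
open scoped Topology
open Filter

noncomputable section

variable {G : Type*}

namespace Stmt10Aux

/-! ### Facts about `Tpos` -/

lemma zero_mem_Tpos : (0 : Circle1) ∈ Tpos :=
  ⟨0, ⟨by norm_num, by norm_num⟩, by norm_num⟩

lemma neg_mem_Tpos {u : Circle1} (hu : u ∈ Tpos) : -u ∈ Tpos := by
  obtain ⟨s, hs, rfl⟩ := hu
  refine ⟨-s, ⟨by linarith [hs.2], by linarith [hs.1]⟩, ?_⟩
  show ((-s : ℝ) : Circle1) = -(s : Circle1)
  exact AddCircle.coe_neg 1

lemma not_mem_Tpos {r : ℝ} (h1 : 1/4 < r) (h2 : r < 3/4) : (r : Circle1) ∉ Tpos := by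
  rintro ⟨s, hs, heq⟩
  have heq' : (s : Circle1) = (r : Circle1) := heq
  have h0 : ((s - r : ℝ) : Circle1) = 0 := by
    rw [AddCircle.coe_sub, heq', sub_self]
  rw [AddCircle.coe_eq_zero_iff] at h0
  obtain ⟨n, hn⟩ := h0
  rw [zsmul_eq_mul, mul_one] at hn
  have hlt : (n : ℝ) < 0 := by rw [hn]; linarith [hs.2]
  have hgt : (-1 : ℝ) < n := by rw [hn]; linarith [hs.1]
  have hn0 : n < 0 := by exact_mod_cast hlt
  have hn1 : n ≤ -1 := by omega
  have : (n : ℝ) ≤ -1 := by exact_mod_cast hn1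
  linarith

lemma exists_nsmul_not_mem_Tpos_pos {r : ℝ} (h0 : 0 < r) (h2 : r ≤ 1/2) :
    ∃ n : ℕ, n • ((r : ℝ) : Circle1) ∉ Tpos := by
  by_cases h4 : 1/4 < r
  · exact ⟨1, by simpa using not_mem_Tpos h4 (by linarith)⟩
  · push_neg at h4
    have harch : ∃ n : ℕ, 1/4 < (n : ℝ) * r := by
      obtain ⟨n, hn⟩ := exists_nat_gt ((1/4) / r)
      exact ⟨n, by rwa [div_lt_iff₀ h0] at hn⟩
    classical
    set n := Nat.find harch with hn
    have hfind : 1/4 < (n : ℝ) * r := Nat.find_spec harch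
    have hne : n ≠ 0 := by
      intro h
      rw [h] at hfind; norm_num at hfind
    have hprev : ¬ (1/4 < ((n - 1 : ℕ) : ℝ) * r) := Nat.find_min harch (by omega)
    push_neg at hprev
    have hub : (n : ℝ) * r < 3/4 := by
      have h1n : 1 ≤ n := Nat.one_le_iff_ne_zero.mpr hne
      have hcast : ((n - 1 : ℕ) : ℝ) = (n : ℝ) - 1 := by
        rw [Nat.cast_sub h1n, Nat.cast_one]
      have h' : ((n : ℝ) - 1) * r ≤ 1/4 := by rw [← hcast]; exact hprev
      nlinarith
    refine ⟨n, ?_⟩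
    have hcoe : (n : ℕ) • ((r : ℝ) : Circle1) = (((n : ℝ) * r : ℝ) : Circle1) := by
      rw [← AddCircle.coe_nsmul, nsmul_eq_mul]
    rw [hcoe]
    exact not_mem_Tpos hfind hub

lemma exists_nsmul_not_mem_Tpos {t : Circle1} (ht : t ≠ 0) : ∃ n : ℕ, n • t ∉ Tpos := by
  obtain ⟨r₀, rfl⟩ := QuotientAddGroup.mk_surjective t
  set r : ℝ := Int.fract (r₀ + 1/2) - 1/2 with hr
  have hfr := Int.fract_nonneg (r₀ + 1/2)
  have hfr' := Int.fract_lt_one (r₀ + 1/2)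
  have hrange : r ∈ Set.Ico (-(1/2) : ℝ) (1/2) := ⟨by rw [hr]; linarith, by rw [hr]; linarith⟩
  have hcoe : ((r : ℝ) : Circle1) = (r₀ : Circle1) := by
    have hfd : Int.fract (r₀ + 1/2) = (r₀ + 1/2) - ⌊r₀ + 1/2⌋ :=
      (Int.self_sub_floor (r₀ + 1/2)).symm
    have hsub : ((r - r₀ : ℝ) : Circle1) = 0 := by
      rw [AddCircle.coe_eq_zero_iff]
      refine ⟨-⌊r₀ + 1/2⌋, ?_⟩
      rw [zsmul_eq_mul, mul_one, hr, hfd]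
      push_cast; ring
    rw [AddCircle.coe_sub] at hsub
    exact sub_eq_zero.mp hsub
  have hrne : r ≠ 0 := by
    intro h
    apply ht
    rw [← hcoe, h]
    norm_num
  rcases lt_or_gt_of_ne hrne with hneg | hpos
  · -- r < 0 : use -t
    obtain ⟨n, hn⟩ := exists_nsmul_not_mem_Tpos_pos (r := -r) (by linarith) (by linarith [hrange.1])
    refine ⟨n, fun hmem => hn ?_⟩
    have : ((-r : ℝ) : Circle1) = -((r : ℝ) : Circle1) := rfl
    rw [this, hcoe, smul_neg]
    exact neg_mem_Tpos hmem
  · obtain ⟨n, hn⟩ := exists_nsmul_not_mem_Tpos_pos (r := r) hpos (le_of_lt hrange.2)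
    rw [hcoe] at hn
    exact ⟨n, hn⟩

/-! ### Characters separate points, with value outside `Tpos` -/

def ratCircleHom : AddCircle (1 : ℚ) →+ Circle1 :=
  QuotientAddGroup.map _ _ (Rat.castHom ℝ).toAddMonoidHom (by
    rintro x hx
    rw [AddSubgroup.mem_zmultiples_iff] at hx
    rw [AddSubgroup.mem_comap, AddSubgroup.mem_zmultiples_iff]
    obtain ⟨k, hk⟩ := hx
    refine ⟨k, ?_⟩
    simp only [RingHom.toAddMonoidHom_eq_coe, AddMonoidHom.coe_coe]
    rw [← hk, map_zsmul, map_one])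

lemma ratCircleHom_mk (q : ℚ) : ratCircleHom ((q : ℚ) : AddCircle (1 : ℚ)) = ((q : ℝ) : Circle1) :=
  rfl

lemma ratCircleHom_ne_zero {x : AddCircle (1 : ℚ)} (hx : x ≠ 0) : ratCircleHom x ≠ 0 := by
  intro h
  apply hx
  induction x using QuotientAddGroup.induction_on with
  | H q =>
    rw [ratCircleHom_mk, AddCircle.coe_eq_zero_iff] at h
    obtain ⟨n, hn⟩ := h
    rw [zsmul_eq_mul, mul_one] at hn
    rw [AddCircle.coe_eq_zero_iff]
    exact ⟨n, by rw [zsmul_eq_mul, mul_one]; exact_mod_cast hn⟩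

lemma exists_char_not_mem_Tpos {Q : Type*} [AddCommGroup Q] {q : Q} (hq : q ≠ 0) :
    ∃ ψ : Q →+ Circle1, ψ q ∉ Tpos := by
  obtain ⟨c, hc⟩ := CharacterModule.exists_character_apply_ne_zero_of_ne_zero hq
  have h0 : ratCircleHom (c q) ≠ 0 := ratCircleHom_ne_zero hc
  obtain ⟨n, hn⟩ := exists_nsmul_not_mem_Tpos h0
  refine ⟨n • (ratCircleHom.comp (show Q →+ AddCircle (1 : ℚ) from c)), ?_⟩
  exact hn

/-! ### Extension of characters -/

lemma char_extend {G : Type*} [AddCommGroup G] (H : AddSubgroup G) (χ : ↥H →+ Circle1) :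
    ∃ φ : G →+ Circle1, φ.comp H.subtype = χ :=
  (Module.Baer.of_divisible Circle1).extension_property_addMonoidHom H.subtype
    Subtype.coe_injective χ

/-! ### The extension topology -/

variable [AddCommGroup G] (H : AddSubgroup G)
variable (ν : TopologicalSpace ↥H) (hν : @IsTopologicalAddGroup ↥H ν _)

def extBasis : AddGroupFilterBasis G where
  sets := {S | ∃ U ∈ @nhds ↥H ν 0, S = Subtype.val '' U}
  nonempty := ⟨Subtype.val '' Set.univ, Set.univ, Filter.univ_mem, rfl⟩
  inter_sets := by
    rintro _ _ ⟨U, hU, rfl⟩ ⟨V, hV, rfl⟩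
    refine ⟨Subtype.val '' (U ∩ V), ⟨U ∩ V, Filter.inter_mem hU hV, rfl⟩, ?_⟩
    rw [Set.image_inter Subtype.coe_injective]
  zero' := by
    rintro _ ⟨U, hU, rfl⟩
    letI := ν
    exact ⟨0, mem_of_mem_nhds hU, rfl⟩
  add' := by
    rintro _ ⟨U, hU, rfl⟩
    letI := ν; haveI := hν
    obtain ⟨V, hV, hVU⟩ := exists_nhds_zero_half hU
    refine ⟨Subtype.val '' V, ⟨V, hV, rfl⟩, ?_⟩
    rintro x ⟨_, ⟨v, hv, rfl⟩, _, ⟨w, hw, rfl⟩, rfl⟩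
    exact ⟨v + w, hVU v hv w hw, rfl⟩
  neg' := by
    rintro _ ⟨U, hU, rfl⟩
    letI := ν; haveI := hν
    have hV : (fun h : ↥H => -h) ⁻¹' U ∈ 𝓝 (0 : ↥H) := by
      have hc : Continuous (fun h : ↥H => -h) := continuous_neg
      exact hc.continuousAt.preimage_mem_nhds (by simpa using hU)
    refine ⟨Subtype.val '' ((fun h : ↥H => -h) ⁻¹' U), ⟨_, hV, rfl⟩, ?_⟩
    rintro _ ⟨u, hu, rfl⟩
    exact ⟨-u, hu, rfl⟩
  conj' := by
    rintro x₀ _ ⟨U, hU, rfl⟩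
    refine ⟨Subtype.val '' U, ⟨U, hU, rfl⟩, ?_⟩
    intro y hy
    have : x₀ + y + -x₀ = y := by abel
    simpa [this] using hy

def extTop : TopologicalSpace G := (extBasis H ν hν).topology

lemma nhds_extTop_zero :
    @nhds G (extTop H ν hν) 0 = Filter.map Subtype.val (@nhds ↥H ν 0) := by
  rw [show @nhds G (extTop H ν hν) 0 = (extBasis H ν hν).toFilterBasis.filter from
    AddGroupFilterBasis.nhds_zero_eq _]
  ext S
  rw [FilterBasis.mem_filter_iff, Filter.mem_map]
  constructor
  · rintro ⟨_, ⟨U, hU, rfl⟩, hsub⟩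
    exact Filter.mem_of_superset hU ((Set.subset_preimage_image _ _).trans
      (Set.preimage_mono hsub))
  · intro hS
    exact ⟨Subtype.val '' (Subtype.val ⁻¹' S), ⟨_, hS, rfl⟩, Set.image_preimage_subset _ _⟩

lemma extTop_addGroup : @IsTopologicalAddGroup G (extTop H ν hν) _ :=
  AddGroupFilterBasis.isTopologicalAddGroup _

lemma extTop_H_open : @IsOpen G (extTop H ν hν) (H : Set G) := by
  letI := extTop H ν hν
  haveI := extTop_addGroup H ν hν
  apply AddSubgroup.isOpen_of_mem_nhds (g := (0 : G))
  rw [nhds_extTop_zero, Filter.mem_map]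
  have : (Subtype.val : ↥H → G) ⁻¹' (H : Set G) = Set.univ := by
    ext x; simp [x.2]
  rw [this]
  exact Filter.univ_mem

lemma induced_extTop :
    TopologicalSpace.induced (Subtype.val : ↥H → G) (extTop H ν hν) = ν := by
  letI := extTop H ν hν
  have h1 : @IsTopologicalAddGroup ↥H
      (TopologicalSpace.induced (Subtype.val : ↥H → G) (extTop H ν hν)) _ := by
    letI := extTop H ν hν
    haveI := extTop_addGroup H ν hν
    exact topologicalAddGroup_induced H.subtype
  refine IsTopologicalAddGroup.ext h1 hν ?_
  rw [nhds_induced]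
  have h0 : (Subtype.val : ↥H → G) (0 : ↥H) = 0 := rfl
  rw [h0, nhds_extTop_zero, Filter.comap_map Subtype.coe_injective]

lemma isChar_extTop_iff (φ : G →+ Circle1) :
    IsChar (extTop H ν hν) φ ↔ IsChar ν (φ.comp H.subtype) := by
  constructor
  · intro h
    letI := extTop H ν hν
    have hres : IsChar (TopologicalSpace.induced (Subtype.val : ↥H → G) (extTop H ν hν))
        (φ.comp H.subtype) :=
      @Continuous.comp ↥H G Circle1
        (TopologicalSpace.induced (Subtype.val : ↥H → G) (extTop H ν hν)) (extTop H ν hν) _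
        Subtype.val φ h (@continuous_induced_dom ↥H G Subtype.val (extTop H ν hν))
    rwa [induced_extTop H ν hν] at hres
  · intro h
    letI := extTop H ν hν
    haveI := extTop_addGroup H ν hν
    apply continuous_of_continuousAt_zero φ
    unfold ContinuousAt
    rw [map_zero, nhds_extTop_zero, Filter.tendsto_map'_iff]
    have := (@Continuous.tendsto ↥H Circle1 ν _ _ h 0)
    simpa using this

/-- Restriction of characters along an open subgroup. -/
lemma isChar_iff_of_open (τ : TopologicalSpace G) (hg : @IsTopologicalAddGroup G τ _)
    (hopen : @IsOpen G τ (H : Set G)) (φ : G →+ Circle1) :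
    IsChar τ φ ↔ IsChar (TopologicalSpace.induced (Subtype.val : ↥H → G) τ) (φ.comp H.subtype) := by
  letI := τ
  haveI := hg
  constructor
  · intro h
    exact h.comp continuous_induced_dom
  · intro h
    have hmem : (H : Set G) ∈ 𝓝 (0 : G) := hopen.mem_nhds H.zero_mem
    have hmap : Filter.map (Subtype.val : ↥H → G)
        (@nhds ↥H (TopologicalSpace.induced (Subtype.val : ↥H → G) τ) 0) = 𝓝 (0 : G) := by
      rw [nhds_induced]
      have h0 : (Subtype.val : ↥H → G) (0 : ↥H) = 0 := rfl
      rw [h0, Filter.map_comap, Subtype.range_coe_subtype]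
      exact inf_eq_left.mpr (Filter.le_principal_iff.mpr hmem)
    apply continuous_of_continuousAt_zero φ
    unfold ContinuousAt
    rw [map_zero, ← hmap, Filter.tendsto_map'_iff]
    have := (@Continuous.tendsto ↥H Circle1
      (TopologicalSpace.induced (Subtype.val : ↥H → G) τ) _ _ h 0)
    simpa using this

lemma quasiConvex_image {M : Set ↥H} (hM : QuasiConvex ν M) :
    QuasiConvex (extTop H ν hν) (Subtype.val '' M) := by
  intro x hx
  by_cases hxH : x ∈ H
  · have hxM : (⟨x, hxH⟩ : ↥H) ∉ M := fun hmem => hx ⟨⟨x, hxH⟩, hmem, rfl⟩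
    obtain ⟨χ, hχchar, hχM, hχx⟩ := hM _ hxM
    obtain ⟨φ, hφext⟩ := char_extend H χ
    refine ⟨φ, (isChar_extTop_iff H ν hν φ).mpr (by rw [hφext]; exact hχchar), ?_, ?_⟩
    · rintro _ ⟨m, hm, rfl⟩
      have : φ m = χ m := DFunLike.congr_fun hφext m
      rw [this]
      exact hχM m hm
    · have : φ x = χ ⟨x, hxH⟩ := DFunLike.congr_fun hφext ⟨x, hxH⟩
      rw [this]
      exact hχx
  · have hq : (QuotientAddGroup.mk' H x) ≠ 0 := by
      intro h
      exact hxH ((QuotientAddGroup.eq_zero_iff x).mp h)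
    obtain ⟨ψ, hψ⟩ := exists_char_not_mem_Tpos hq
    refine ⟨ψ.comp (QuotientAddGroup.mk' H), ?_, ?_, hψ⟩
    · apply (isChar_extTop_iff H ν hν _).mpr
      have hz : (ψ.comp (QuotientAddGroup.mk' H)).comp H.subtype = 0 := by
        ext h
        have h0 : ((h : G) : G ⧸ H) = 0 := (QuotientAddGroup.eq_zero_iff _).mpr h.2
        simp [QuotientAddGroup.mk'_apply, h0]
      rw [hz]
      show @Continuous ↥H Circle1 ν _ (0 : ↥H →+ Circle1)
      exact @continuous_const ↥H Circle1 ν _ 0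
    · rintro _ ⟨m, _, rfl⟩
      have : (QuotientAddGroup.mk' H) (m : G) = 0 := by
        rw [QuotientAddGroup.mk'_apply, QuotientAddGroup.eq_zero_iff]
        exact m.2
      simp only [AddMonoidHom.coe_comp, Function.comp_apply, this, map_zero]
      exact zero_mem_Tpos

lemma lqc_extTop (hlqc : LocallyQuasiConvex ν) : LocallyQuasiConvex (extTop H ν hν) := by
  intro U hU
  rw [nhds_extTop_zero, Filter.mem_map] at hU
  obtain ⟨M, hMnhds, hMqc, hMsub⟩ := hlqc _ hU
  refine ⟨Subtype.val '' M, ?_, quasiConvex_image H ν hν hMqc, ?_⟩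
  · rw [nhds_extTop_zero, Filter.mem_map]
    exact Filter.mem_of_superset hMnhds (Set.subset_preimage_image _ _)
  · exact Set.image_subset_iff.mpr hMsub

end Stmt10Aux

open Stmt10Aux in
theorem stmt10 {G : Type*} [AddCommGroup G] (τ : TopologicalSpace G)
    (H : AddSubgroup G) (hopen : @IsOpen G τ (H : Set G)) (hM : IsMackey τ) :
    IsMackey (TopologicalSpace.induced (Subtype.val : H → G) τ) := by
  obtain ⟨hτg, hτlqc, hτmax⟩ := hM
  have hτHg : @IsTopologicalAddGroup ↥H (TopologicalSpace.induced (Subtype.val : H → G) τ) _ := by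
    letI := τ
    exact topologicalAddGroup_induced H.subtype
  refine ⟨hτHg, ?_, ?_⟩
  · -- locally quasi-convex
    letI := τ
    intro U' hU'
    rw [nhds_induced] at hU'
    have h0 : (Subtype.val : ↥H → G) (0 : ↥H) = 0 := rfl
    rw [h0] at hU'
    obtain ⟨U, hU, hUsub⟩ := hU'
    obtain ⟨M, hMnhds, hMqc, hMsub⟩ := hτlqc U hU
    refine ⟨Subtype.val ⁻¹' M, ?_, ?_, fun y hy => hUsub (hMsub hy)⟩
    · rw [nhds_induced, h0]
      exact Filter.preimage_mem_comap hMnhds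
    · intro x hx
      obtain ⟨φ, hφchar, hφM, hφx⟩ := hMqc (x : G) hx
      letI := τ
      exact ⟨φ.comp H.subtype, hφchar.comp continuous_induced_dom,
        fun y hy => hφM _ hy, hφx⟩
  · -- Mackey maximality
    intro ν hνg hνlqc hcomp
    have key : τ ≤ extTop H ν hνg := by
      apply hτmax
      · exact extTop_addGroup H ν hνg
      · exact lqc_extTop H ν hνg hνlqc
      · intro φ
        rw [isChar_iff_of_open H τ hτg hopen φ, isChar_extTop_iff H ν hνg φ]
        exact hcomp (φ.comp H.subtype)
    calc TopologicalSpace.induced (Subtype.val : H → G) τ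
        ≤ TopologicalSpace.induced (Subtype.val : H → G) (extTop H ν hνg) :=
          induced_mono key
      _ = ν := induced_extTop H ν hνg
end
end

section
/- Let (G, τ) be a topological abelian group, H an open subgroup, and ν a metrizable locally quasi-convex group topology on H which is not Mackey. Then the extension ν̄ to G is a metrizable locally quasi-convex group topology on G which is not Mackey. -/
open scoped Topology
open Filter

noncomputable section

variable {G : Type*}

/-- `νb` is the extension of the topology `ν` on the subgroup `H` to all of `G`. -/
def ExtBasis {G : Type*} [AddCommGroup G] (H : AddSubgroup G) (ν : TopologicalSpace H)
    (νb : TopologicalSpace G) : Prop :=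
  (@nhds G νb 0).HasBasis (fun V : Set H => V ∈ @nhds H ν 0)
    (fun V => Subtype.val '' V)

lemma circle_coe_eq_coe (r s : ℝ) : ((r : Circle1) = (s : Circle1)) ↔ ∃ k : ℤ, r - s = k := by
  constructor
  · intro h
    have : ((r - s : ℝ) : Circle1) = 0 := by
      rw [AddCircle.coe_sub, sub_eq_zero]; exact h
    rw [AddCircle.coe_eq_zero_iff] at this
    obtain ⟨k, hk⟩ := this
    exact ⟨k, by simpa using hk.symm⟩
  · rintro ⟨k, hk⟩
    have : ((r - s : ℝ) : Circle1) = 0 := by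
      rw [AddCircle.coe_eq_zero_iff]; exact ⟨k, by simpa using hk.symm⟩
    rw [AddCircle.coe_sub, sub_eq_zero] at this; exact this

lemma not_mem_Tpos {r : ℝ} (h1 : 1/4 < r) (h2 : r < 3/4) : (r : Circle1) ∉ Tpos := by
  rintro ⟨s, hs, hsr⟩
  rw [circle_coe_eq_coe] at hsr
  obtain ⟨k, hk⟩ := hsr
  obtain ⟨hs1, hs2⟩ := hs
  have hk1 : (k : ℝ) < 0 := by linarith
  have hk2 : (-1 : ℝ) < k := by linarith
  have : k < 0 := by exact_mod_cast hk1
  have : (-1 : ℤ) < k := by exact_mod_cast hk2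
  omega

lemma exists_char_val_not_Tpos {Q : Type*} [AddCommGroup Q] {a : Q} (ha : a ≠ 0) :
    ∃ ψ : Q →+ Circle1, ψ a ∉ Tpos := by
  classical
  obtain ⟨r, hr1, hr2, m, hm⟩ : ∃ r : ℝ, 1/4 < r ∧ r < 3/4 ∧ ∃ m : ℤ,
      (addOrderOf a : ℝ) * r = m := by
    rcases Nat.eq_zero_or_pos (addOrderOf a) with h0 | hpos
    · exact ⟨1/2, by norm_num, by norm_num, 0, by simp [h0]⟩
    · set n := addOrderOf a with hn
      have hn1 : n ≠ 1 := by
        intro h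
        exact ha (AddMonoid.addOrderOf_eq_one_iff.mp h)
      have hn2 : 2 ≤ n := by omega
      refine ⟨(n / 2 : ℕ) / (n : ℝ), ?_, ?_, (n / 2 : ℕ), ?_⟩
      · rw [lt_div_iff₀ (by positivity)]
        have h' : (n : ℝ) < 4 * ((n / 2 : ℕ) : ℝ) := by exact_mod_cast (by omega : n < 4 * (n / 2))
        linarith
      · rw [div_lt_iff₀ (by positivity)]
        have h' : 4 * ((n / 2 : ℕ) : ℝ) < 3 * n := by exact_mod_cast (by omega : 4 * (n / 2) < 3 * n)
        linarith
      · rw [mul_comm, div_mul_cancel₀ _ (by positivity : (n : ℝ) ≠ 0)]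
        norm_cast
  set c : Circle1 := (r : Circle1) with hc
  have hnc : ∀ k : ℤ, k • a = 0 → k • c = 0 := by
    intro k hk
    have hdvd : (addOrderOf a : ℤ) ∣ k := addOrderOf_dvd_iff_zsmul_eq_zero.mpr hk
    obtain ⟨t, rfl⟩ := hdvd
    have hcn : (addOrderOf a : ℤ) • c = 0 := by
      rw [hc, ← AddCircle.coe_zsmul]
      rw [AddCircle.coe_eq_zero_iff]
      refine ⟨m, ?_⟩
      simp only [smul_eq_mul, mul_one, zsmul_eq_mul]
      push_cast
      linarith [hm]
    rw [mul_comm, mul_smul, hcn, smul_zero]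
  set f : ℤ →+ Q := zmultiplesHom Q a with hf
  set g : ℤ →+ Circle1 := zmultiplesHom Circle1 c with hg
  have hker : ∀ k ∈ f.ker, g k = 0 := by
    intro k hk
    have : k • a = 0 := hk
    simpa [hg] using hnc k this
  set e := QuotientAddGroup.quotientKerEquivRange f with he
  set χ₀ : f.range →+ Circle1 :=
    (QuotientAddGroup.lift f.ker g hker).comp e.symm.toAddMonoidHom with hχ₀
  obtain ⟨ψ, hψ⟩ := (Module.Baer.of_divisible _).extension_property_addMonoidHom
    f.range.subtype f.range.subtype_injective χ₀
  have haR : a ∈ f.range := ⟨1, by simp [hf]⟩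
  have key : ψ a = c := by
    have h1 : ψ (f.range.subtype ⟨a, haR⟩) = χ₀ ⟨a, haR⟩ := by
      rw [← AddMonoidHom.comp_apply, hψ]
    have h2 : e.symm ⟨a, haR⟩ = QuotientAddGroup.mk 1 := by
      rw [AddEquiv.symm_apply_eq]
      refine Subtype.ext ?_
      show a = ((e (QuotientAddGroup.mk 1) : f.range) : Q)
      have h4 : ((e (QuotientAddGroup.mk 1) : f.range) : Q) = f 1 := rfl
      rw [h4]
      simp [hf]
    have h3 : χ₀ ⟨a, haR⟩ = g 1 := by
      rw [hχ₀]
      simp only [AddMonoidHom.comp_apply, AddEquiv.coe_toAddMonoidHom, h2]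
      rfl
    have : ψ a = g 1 := by rw [← h3, ← h1]; rfl
    simpa [hg] using this
  exact ⟨ψ, by rw [key]; exact not_mem_Tpos hr1 hr2⟩


section ExtLemmas

variable [AddCommGroup G] {H : AddSubgroup G}

lemma extBasis_nhds_eq {σ : TopologicalSpace H} {νb : TopologicalSpace G}
    (hb : ExtBasis H σ νb) :
    @nhds G νb 0 = Filter.map Subtype.val (@nhds H σ 0) :=
  hb.eq_of_same_basis ((Filter.basis_sets _).map _)

lemma exists_char_vanishing_not_Tpos {x : G} (hx : x ∉ H) :
    ∃ φ : G →+ Circle1, (∀ g ∈ H, φ g = 0) ∧ φ x ∉ Tpos := by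
  have hne : QuotientAddGroup.mk' H x ≠ 0 := by
    simpa [QuotientAddGroup.mk'_apply, QuotientAddGroup.eq_zero_iff] using hx
  obtain ⟨ψ, hψ⟩ := exists_char_val_not_Tpos hne
  refine ⟨ψ.comp (QuotientAddGroup.mk' H), fun g hg => ?_, hψ⟩
  have h0 : QuotientAddGroup.mk' H g = 0 := (QuotientAddGroup.eq_zero_iff g).mpr hg
  show ψ (QuotientAddGroup.mk' H g) = 0
  rw [h0, map_zero]

lemma extBasis_isChar_iff {σ : TopologicalSpace H} (hσ : @IsTopologicalAddGroup H σ _)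
    {νb : TopologicalSpace G} (hνb : @IsTopologicalAddGroup G νb _)
    (hb : ExtBasis H σ νb) (φ : G →+ Circle1) :
    IsChar νb φ ↔ IsChar σ (φ.comp H.subtype) := by
  constructor
  · intro h
    have hval : @Continuous H G σ νb Subtype.val := by
      letI := σ; letI := νb
      haveI := hσ; haveI := hνb
      have htend : Filter.Tendsto (H.subtype) (@nhds H σ 0) (@nhds G νb (H.subtype 0)) := by
        rw [map_zero, extBasis_nhds_eq hb]
        exact Filter.tendsto_map
      exact continuous_of_continuousAt_zero H.subtype htend
    exact @Continuous.comp H G Circle1 σ νb _ _ _ h hval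
  · intro h
    letI := νb; haveI := hνb
    have htend : Filter.Tendsto φ (@nhds G νb 0) (nhds (φ 0)) := by
      rw [map_zero, extBasis_nhds_eq hb, Filter.tendsto_map'_iff]
      simpa using h.tendsto 0
    exact continuous_of_continuousAt_zero φ htend

end ExtLemmas

section ExtLemmas2

variable [AddCommGroup G] {H : AddSubgroup G}

lemma lqc_ext {σ : TopologicalSpace H} (hσg : @IsTopologicalAddGroup H σ _)
    (hσlqc : LocallyQuasiConvex σ) {νb : TopologicalSpace G}
    (hνbg : @IsTopologicalAddGroup G νb _) (hb : ExtBasis H σ νb) :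
    LocallyQuasiConvex νb := by
  intro U hU
  obtain ⟨V, hV, hVU⟩ := hb.mem_iff.mp hU
  obtain ⟨M, hM, hMqc, hMV⟩ := hσlqc V hV
  refine ⟨Subtype.val '' M, hb.mem_of_mem hM, ?_, (Set.image_mono hMV).trans hVU⟩
  intro x hx
  by_cases hxH : x ∈ H
  · have hxM : (⟨x, hxH⟩ : H) ∉ M := fun h => hx ⟨⟨x, hxH⟩, h, rfl⟩
    obtain ⟨χ, hχc, hχM, hχx⟩ := hMqc _ hxM
    obtain ⟨φ, hφ⟩ := (Module.Baer.of_divisible _).extension_property_addMonoidHom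
      H.subtype H.subtype_injective χ
    have happ : ∀ h : H, φ (h : G) = χ h := fun h => by
      rw [← hφ]; rfl
    refine ⟨φ, ?_, ?_, ?_⟩
    · exact (extBasis_isChar_iff hσg hνbg hb φ).mpr (by rw [hφ]; exact hχc)
    · rintro y ⟨m, hm, rfl⟩
      rw [happ m]
      exact hχM m hm
    · rw [show x = ((⟨x, hxH⟩ : H) : G) from rfl, happ]
      exact hχx
  · obtain ⟨φ, hφH, hφx⟩ := exists_char_vanishing_not_Tpos hxH
    refine ⟨φ, ?_, ?_, hφx⟩
    · apply (extBasis_isChar_iff hσg hνbg hb φ).mpr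
      have h0 : φ.comp H.subtype = 0 := by
        ext h
        exact hφH h h.2
      rw [h0]
      letI := σ
      exact continuous_zero
    · rintro y ⟨m, hm, rfl⟩
      rw [hφH _ m.2]
      exact zero_mem_Tpos

lemma ext_le_of_le {σ σ' : TopologicalSpace H}
    (hσg : @IsTopologicalAddGroup H σ _) (hσ'g : @IsTopologicalAddGroup H σ' _)
    {νb νb' : TopologicalSpace G} (hb : ExtBasis H σ νb) (hb' : ExtBasis H σ' νb')
    (hle : νb ≤ νb') : σ ≤ σ' := by
  have hn : ∀ V' ∈ @nhds H σ' 0, V' ∈ @nhds H σ 0 := by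
    intro V' hV'
    have h1 : Subtype.val '' V' ∈ @nhds G νb' 0 := hb'.mem_of_mem hV'
    have h2 : Subtype.val '' V' ∈ @nhds G νb 0 := by
      exact (@nhds_mono G νb νb' 0 hle) h1
    obtain ⟨V, hV, hsub⟩ := hb.mem_iff.mp h2
    have : V ⊆ V' := by
      intro v hv
      obtain ⟨v', hv', hvv⟩ := hsub ⟨v, hv, rfl⟩
      rwa [← Subtype.val_injective hvv]
    exact Filter.mem_of_superset hV this
  apply le_of_nhds_le_nhds
  intro x
  calc @nhds H σ x = Filter.map (x + ·) (@nhds H σ 0) := by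
        letI := σ; haveI := hσg
        exact (map_add_left_nhds_zero x).symm
    _ ≤ Filter.map (x + ·) (@nhds H σ' 0) := Filter.map_mono (fun s hs => hn s hs)
    _ = @nhds H σ' x := by
        letI := σ'; haveI := hσ'g
        exact map_add_left_nhds_zero x

end ExtLemmas2

section Construction

variable [AddCommGroup G] (H : AddSubgroup G)

/-- The group filter basis on `G` of images of `σ`-neighborhoods of `0` in `H`. -/
def extFB (σ : TopologicalSpace H) (hσ : @IsTopologicalAddGroup H σ _) :
    AddGroupFilterBasis G := by
  apply addGroupFilterBasisOfComm
    {W : Set G | ∃ V ∈ @nhds H σ 0, Subtype.val '' V = W}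
  · exact ⟨Subtype.val '' Set.univ, Set.univ, Filter.univ_mem, rfl⟩
  · rintro _ _ ⟨V₁, hV₁, rfl⟩ ⟨V₂, hV₂, rfl⟩
    refine ⟨Subtype.val '' (V₁ ∩ V₂), ⟨V₁ ∩ V₂, Filter.inter_mem hV₁ hV₂, rfl⟩, ?_⟩
    rw [Set.image_inter Subtype.val_injective]
  · rintro _ ⟨V, hV, rfl⟩
    letI := σ
    exact ⟨0, mem_of_mem_nhds hV, rfl⟩
  · rintro _ ⟨V, hV, rfl⟩
    letI := σ; haveI := hσ
    obtain ⟨W, hW, hWV⟩ := exists_nhds_zero_half hV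
    refine ⟨Subtype.val '' W, ⟨W, hW, rfl⟩, ?_⟩
    rintro z hz
    rw [Set.mem_add] at hz
    obtain ⟨a, ha, b, hb, rfl⟩ := hz
    obtain ⟨a', ha', rfl⟩ := ha
    obtain ⟨b', hb', rfl⟩ := hb
    exact ⟨a' + b', hWV _ ha' _ hb', rfl⟩
  · rintro _ ⟨V, hV, rfl⟩
    letI := σ; haveI := hσ
    refine ⟨Subtype.val '' ((fun x => -x) ⁻¹' V), ⟨_, ?_, rfl⟩, ?_⟩
    · exact (continuous_neg.tendsto' 0 0 neg_zero) hV
    · rintro _ ⟨a, ha, rfl⟩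
      exact ⟨-a, ha, rfl⟩

lemma extFB_extBasis (σ : TopologicalSpace H) (hσ : @IsTopologicalAddGroup H σ _) :
    ExtBasis H σ (extFB H σ hσ).topology := by
  have h := (extFB H σ hσ).nhds_zero_hasBasis
  constructor
  intro t
  rw [h.mem_iff]
  constructor
  · rintro ⟨W, ⟨V, hV, rfl⟩, hsub⟩
    exact ⟨V, hV, hsub⟩
  · rintro ⟨V, hV, hsub⟩
    exact ⟨Subtype.val '' V, ⟨V, hV, rfl⟩, hsub⟩

end Construction

section Metrizable

variable [AddCommGroup G] {H : AddSubgroup G}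

lemma ext_metrizable {σ : TopologicalSpace H} (hσg : @IsTopologicalAddGroup H σ _)
    (hσmet : @TopologicalSpace.MetrizableSpace H σ) {νb : TopologicalSpace G}
    (hνbg : @IsTopologicalAddGroup G νb _) (hb : ExtBasis H σ νb) :
    @TopologicalSpace.MetrizableSpace G νb := by
  letI := νb; haveI := hνbg
  haveI hT1 : T1Space G := by
    apply IsTopologicalAddGroup.t1Space
    rw [← isOpen_compl_iff, isOpen_iff_mem_nhds]
    intro x hx
    rw [← map_add_left_nhds_zero x, Filter.mem_map]
    rw [Filter.HasBasis.mem_iff hb]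
    by_cases hxH : x ∈ H
    · haveI hT1H : T1Space H := by
        letI := σ; haveI := hσmet
        infer_instance
      have hh0 : (0 : H) ≠ -(⟨x, hxH⟩ : H) := by
        intro h
        apply hx
        have : (⟨x, hxH⟩ : H) = 0 := by
          rw [← neg_eq_zero, ← h]
        simpa [Subtype.ext_iff] using this
      refine ⟨{-(⟨x, hxH⟩ : H)}ᶜ, compl_singleton_mem_nhds hh0, ?_⟩
      rintro _ ⟨a, ha, rfl⟩ hmem
      apply ha
      have : (a : G) = -x := by
        simpa [eq_neg_iff_add_eq_zero, add_comm] using hmem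
      apply Subtype.ext
      simpa using this
    · refine ⟨Set.univ, Filter.univ_mem, ?_⟩
      rintro _ ⟨a, _, rfl⟩ hmem
      apply hxH
      have : x = -(a : G) := by
        simpa [eq_neg_iff_add_eq_zero] using hmem
      rw [this]
      exact H.neg_mem a.2
  haveI hcg : (@nhds G νb 0).IsCountablyGenerated := by
    rw [extBasis_nhds_eq hb]
    haveI : (@nhds H σ 0).IsCountablyGenerated := by
      letI := σ; haveI := hσmet
      infer_instance
    exact Filter.map.isCountablyGenerated _ _
  letI : UniformSpace G := IsTopologicalAddGroup.rightUniformSpace G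
  haveI : IsUniformAddGroup G := isUniformAddGroup_of_addCommGroup
  haveI : (uniformity G).IsCountablyGenerated := by
    rw [uniformity_eq_comap_nhds_zero G]
    exact Filter.comap.isCountablyGenerated _ _
  exact UniformSpace.metrizableSpace

end Metrizable

theorem stmt11 {G : Type*} [AddCommGroup G] (τ : TopologicalSpace G)
    (htg : @IsTopologicalAddGroup G τ _) (H : AddSubgroup G)
    (hopen : @IsOpen G τ (H : Set G)) (ν : TopologicalSpace H)
    (hνg : @IsTopologicalAddGroup H ν _) (hνmet : @TopologicalSpace.MetrizableSpace H ν)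
    (hνlqc : LocallyQuasiConvex ν) (hνnM : ¬ IsMackey ν) :
    ∀ νb : TopologicalSpace G, @IsTopologicalAddGroup G νb _ → ExtBasis H ν νb →
      @TopologicalSpace.MetrizableSpace G νb ∧ LocallyQuasiConvex νb ∧ ¬ IsMackey νb := by
  intro νb hνbg hb
  refine ⟨ext_metrizable hνg hνmet hνbg hb, lqc_ext hνg hνlqc hνbg hb, ?_⟩
  intro hM
  have hC : ¬ ∀ τ' : TopologicalSpace H, @IsTopologicalAddGroup H τ' _ →
      LocallyQuasiConvex τ' → Compatible ν τ' → ν ≤ τ' := by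
    intro hC
    exact hνnM ⟨hνg, hνlqc, hC⟩
  push_neg at hC
  obtain ⟨τ', hτ'g, hτ'lqc, hτ'comp, hτ'le⟩ := hC
  have hbb : ExtBasis H τ' (extFB H τ' hτ'g).topology := extFB_extBasis H τ' hτ'g
  have hτbg : @IsTopologicalAddGroup G (extFB H τ' hτ'g).topology _ :=
    (extFB H τ' hτ'g).isTopologicalAddGroup
  have hτblqc : LocallyQuasiConvex (extFB H τ' hτ'g).topology := lqc_ext hτ'g hτ'lqc hτbg hbb
  have hcomp : Compatible νb (extFB H τ' hτ'g).topology := fun φ => by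
    rw [extBasis_isChar_iff hνg hνbg hb φ, extBasis_isChar_iff hτ'g hτbg hbb φ]
    exact hτ'comp _
  obtain ⟨_, _, hall⟩ := hM
  exact hτ'le (ext_le_of_le hνg hτ'g hb hbb (hall _ hτbg hτblqc hcomp))
end
end

section
/- Let (G, τ) and τ' be compatible group topologies on a bounded abelian group G, and H ≤ G a τ-open subgroup. Then every τ|_H-continuous character of H is τ'|_H-continuous and conversely; that is, τ|_H and τ'|_H are compatible topologies on H. -/
open scoped Topology
open Filter

noncomputable section

variable {G : Type*}

lemma eq_zero_of_forall_nsmul_mem_Tpos (t : Circle1) (h : ∀ n : ℕ, n • t ∈ Tpos) :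
    t = 0 := by
  by_contra ht
  obtain ⟨r, hr, hrt⟩ := h 1
  rw [one_smul] at hrt
  have hr0 : r ≠ 0 := by
    rintro rfl
    exact ht (by rw [← hrt]; norm_num)
  -- let s = |r|
  have hs0 : 0 < |r| := abs_pos.mpr hr0
  have hs4 : |r| ≤ 1/4 := abs_le.mpr ⟨by linarith [hr.1], hr.2⟩
  set n : ℕ := ⌊(4 * |r|)⁻¹⌋₊ + 1 with hn
  have hlt : (4 * |r|)⁻¹ < (n : ℝ) := by
    have := Nat.lt_floor_add_one ((4 * |r|)⁻¹)
    rw [hn]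
    push_cast
    linarith
  have hnr_lb : 1/4 < n * |r| := by
    have h4 : (0:ℝ) < 4 * |r| := by positivity
    have := (inv_lt_iff_one_lt_mul₀ h4).mp hlt
    nlinarith
  have hub : ((n : ℝ) - 1) * |r| ≤ 1/4 := by
    have h1 : ((n : ℝ) - 1) = ⌊(4 * |r|)⁻¹⌋₊ := by push_cast [hn]; ring
    have h2 : (⌊(4 * |r|)⁻¹⌋₊ : ℝ) ≤ (4 * |r|)⁻¹ := Nat.floor_le (by positivity)
    rw [h1]
    calc (⌊(4 * |r|)⁻¹⌋₊ : ℝ) * |r| ≤ (4 * |r|)⁻¹ * |r| := by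
          exact mul_le_mul_of_nonneg_right h2 (abs_nonneg r)
      _ = 1/4 := by field_simp
  have hnr_ub : n * |r| ≤ 1/2 := by nlinarith
  obtain ⟨a, ha, hat⟩ := h n
  rw [← hrt, ← AddCircle.coe_nsmul] at hat
  have hz : ((a - n • r : ℝ) : Circle1) = 0 := by
    rw [AddCircle.coe_sub]
    simp only at hat
    rw [hat, sub_self]
  obtain ⟨k, hk⟩ := (AddCircle.coe_eq_zero_iff (1:ℝ)).mp hz
  simp only [zsmul_eq_mul, mul_one] at hk
  have hns : |(n : ℝ) * r| = n * |r| := by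
    rw [abs_mul, Nat.abs_cast]
  have hk_ne : (k : ℝ) ≠ 0 := by
    rw [hk, nsmul_eq_mul]
    intro h0
    have : a = n * r := by linarith [sub_eq_zero.mp h0]
    have : |a| = n * |r| := by rw [this, hns]
    have haa : |a| ≤ 1/4 := abs_le.mpr ⟨by linarith [ha.1], ha.2⟩
    linarith
  have hk_lt : |(k : ℝ)| < 1 := by
    rw [hk, nsmul_eq_mul]
    have h1 : |a - n * r| ≤ |a| + |(n : ℝ) * r| := abs_sub _ _
    have haa : |a| ≤ 1/4 := abs_le.mpr ⟨by linarith [ha.1], ha.2⟩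
    rw [hns] at h1
    linarith
  have : (1 : ℝ) ≤ |(k : ℝ)| := by
    rw [← Int.cast_abs]
    exact_mod_cast Int.one_le_abs (by exact_mod_cast fun h0 => hk_ne (by rw [h0]; norm_num))
  linarith

lemma linearTop_of_bounded_lqc [AddCommGroup G] (hb : BoundedGroup G)
    (τ : TopologicalSpace G) (htg : @IsTopologicalAddGroup G τ _)
    (hlqc : LocallyQuasiConvex τ) : LinearTop τ := by
  letI := τ
  haveI := htg
  intro U hU
  obtain ⟨M, hM, hqc, hMU⟩ := hlqc U hU
  obtain ⟨m, hm, hmx⟩ := hb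
  -- V : nbhd of 0 with all j-fold multiples, j < m, inside M
  have hcont : ∀ j : ℕ, Continuous fun x : G => j • x := fun j => continuous_nsmul j
  set V : Set G := ⋂ j ∈ Finset.range m, (fun x : G => j • x) ⁻¹' M with hV
  have hVnhds : V ∈ 𝓝 (0 : G) := by
    apply (Filter.biInter_finset_mem _).mpr
    intro j _
    exact (hcont j).continuousAt.preimage_mem_nhds (by simpa using hM)
  have hVmul : ∀ x ∈ V, ∀ n : ℕ, n • x ∈ M := by
    intro x hx n
    have h1 : n • x = (n % m) • x := by
      conv_lhs => rw [← Nat.div_add_mod n m]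
      rw [add_smul, mul_comm, mul_smul, hmx, smul_zero, zero_add]
    rw [h1]
    have := Set.mem_iInter₂.mp hx (n % m) (Finset.mem_range.mpr (Nat.mod_lt n hm))
    exact this
  have hVker : ∀ x ∈ V, ∀ φ : G →+ Circle1, (∀ y ∈ M, φ y ∈ Tpos) → φ x = 0 := by
    intro x hx φ hφ
    apply eq_zero_of_forall_nsmul_mem_Tpos
    intro n
    rw [← map_nsmul]
    exact hφ _ (hVmul x hx n)
  refine ⟨AddSubgroup.closure V, ?_, ?_⟩
  · exact AddSubgroup.isOpen_of_mem_nhds _ (Filter.mem_of_superset hVnhds AddSubgroup.subset_closure)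
  · intro x hx
    refine Set.Subset.trans ?_ hMU hx
    intro y hy
    by_contra hyM
    obtain ⟨φ, _, hφT, hφy⟩ := hqc y hyM
    have : AddSubgroup.closure V ≤ φ.ker := by
      rw [AddSubgroup.closure_le]
      intro z hz
      exact hVker z hz φ hφT
    exact hφy (by rw [AddMonoidHom.mem_ker.mp (this hy)]; exact zero_mem_Tpos)

lemma extend_char [AddCommGroup G] (H U : AddSubgroup G) (χ : H →+ Circle1)
    (hvan : ∀ (u : G) (hH : u ∈ H), u ∈ U → χ ⟨u, hH⟩ = 0) :
    ∃ φ : G →+ Circle1, (∀ h : H, φ h = χ h) ∧ (∀ u ∈ U, φ u = 0) := by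
  set K := H ⊔ U with hK
  have hP : ∀ x : K, ∃ h : H, (x : G) - h ∈ U := by
    rintro ⟨x, hx⟩
    obtain ⟨y, hy, z, hz, hyz⟩ := AddSubgroup.mem_sup.mp hx
    exact ⟨⟨y, hy⟩, by simp only [← hyz]; simpa using hz⟩
  let ψf : K → Circle1 := fun x => χ (hP x).choose
  have hwd : ∀ (x : K) (h : H), (x : G) - h ∈ U → ψf x = χ h := by
    intro x h hxh
    have hc := (hP x).choose_spec
    set h₀ := (hP x).choose
    have hdiff : (h : G) - h₀ ∈ U := by
      have : ((h : G) - h₀) = ((x : G) - h₀) - ((x : G) - h) := by abel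
      rw [this]
      exact sub_mem hc hxh
    have hdiffH : (h : G) - (h₀ : G) ∈ H := sub_mem h.2 h₀.2
    have : χ (⟨(h : G) - h₀, hdiffH⟩ : H) = 0 := hvan _ _ hdiff
    have heq : (⟨(h : G) - h₀, hdiffH⟩ : H) = h - h₀ := by ext; simp
    rw [heq, map_sub, sub_eq_zero] at this
    exact this.symm
  let ψ : K →+ Circle1 :=
    { toFun := ψf
      map_zero' := by
        rw [hwd 0 0 (by simpa using U.zero_mem), map_zero]
      map_add' := by
        intro x y
        show ψf (x + y) = ψf x + ψf y
        rw [hwd x (hP x).choose (hP x).choose_spec, hwd y (hP y).choose (hP y).choose_spec,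
          ← map_add]
        apply hwd
        push_cast
        have : ((x : G) + y) - ((hP x).choose + (hP y).choose) =
            ((x : G) - (hP x).choose) + ((y : G) - (hP y).choose) := by abel
        rw [this]
        exact add_mem (hP x).choose_spec (hP y).choose_spec }
  have hbaer : Module.Baer ℤ Circle1 := Module.Baer.of_divisible _
  obtain ⟨φ, hφ⟩ := hbaer.extension_property_addMonoidHom K.subtype Subtype.val_injective ψ
  have hφψ : ∀ k : K, φ k = ψ k := fun k => DFunLike.congr_fun hφ k
  refine ⟨φ, ?_, ?_⟩
  · intro h
    have hh : (h : G) ∈ K := AddSubgroup.mem_sup_left h.2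
    have := hφψ ⟨h, hh⟩
    rw [this]
    exact hwd ⟨h, hh⟩ h (by simpa using U.zero_mem)
  · intro u hu
    have huK : u ∈ K := AddSubgroup.mem_sup_right hu
    rw [hφψ ⟨u, huK⟩]
    show ψf ⟨u, huK⟩ = 0
    rw [hwd ⟨u, huK⟩ 0 (by simpa using hu), map_zero]

lemma continuous_of_vanish_open [AddCommGroup G] (τ : TopologicalSpace G)
    (htg : @IsTopologicalAddGroup G τ _) (φ : G →+ Circle1) (U : AddSubgroup G)
    (hUopen : @IsOpen G τ (U : Set G)) (hvan : ∀ u ∈ U, φ u = 0) :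
    @Continuous G Circle1 τ _ φ := by
  letI := τ
  haveI := htg
  rw [continuous_def]
  intro S _
  rw [isOpen_iff_mem_nhds]
  intro x hx
  have himg : IsOpen ((fun y => x + y) '' (U : Set G)) :=
    (Homeomorph.addLeft x).isOpenMap _ hUopen
  have hsub : ((fun y => x + y) '' (U : Set G)) ⊆ φ ⁻¹' S := by
    rintro _ ⟨u, hu, rfl⟩
    simp only [Set.mem_preimage, map_add, hvan u hu, add_zero]
    exact hx
  exact Filter.mem_of_superset (himg.mem_nhds ⟨0, U.zero_mem, by simp⟩) hsub

lemma aux_dir [AddCommGroup G] (hb : BoundedGroup G) (τ τ' : TopologicalSpace G)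
    (htg : @IsTopologicalAddGroup G τ _) (hlqc : LocallyQuasiConvex τ)
    (hcomp1 : ∀ φ : G →+ Circle1, IsChar τ φ → IsChar τ' φ)
    (H : AddSubgroup G) (χ : H →+ Circle1)
    (hχ : @Continuous H Circle1 (TopologicalSpace.induced (Subtype.val : H → G) τ) _ χ) :
    @Continuous H Circle1 (TopologicalSpace.induced (Subtype.val : H → G) τ') _ χ := by
  have hlin : LinearTop τ := linearTop_of_bounded_lqc hb τ htg hlqc
  -- a small open neighborhood of 0 inside Tpos
  set W : Set Circle1 := (fun r : ℝ => (r : Circle1)) '' Set.Ioo (-(1/4) : ℝ) (1/4) with hW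
  have hWopen : IsOpen W := by
    rw [hW]
    exact QuotientAddGroup.isOpenMap_coe _ isOpen_Ioo
  have hW0 : (0 : Circle1) ∈ W := ⟨0, by norm_num, by simp⟩
  have hWT : W ⊆ Tpos := Set.image_mono Set.Ioo_subset_Icc_self
  -- find an open subgroup U on which χ vanishes
  obtain ⟨V, hV, hVW⟩ : ∃ V ∈ @nhds G τ 0, (Subtype.val : H → G) ⁻¹' V ⊆ χ ⁻¹' W := by
    have h0 : χ ⁻¹' W ∈ @nhds H (TopologicalSpace.induced (Subtype.val : H → G) τ) 0 := by
      letI := TopologicalSpace.induced (Subtype.val : H → G) τ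
      exact hχ.continuousAt.preimage_mem_nhds (by rw [map_zero]; exact hWopen.mem_nhds hW0)
    rw [@nhds_induced G H τ (Subtype.val : H → G) 0] at h0
    exact Filter.mem_comap.mp h0
  obtain ⟨U, hUopen, hUV⟩ := hlin V hV
  have hvan : ∀ (u : G) (hH : u ∈ H), u ∈ U → χ ⟨u, hH⟩ = 0 := by
    intro u hH hu
    apply eq_zero_of_forall_nsmul_mem_Tpos
    intro n
    rw [← map_nsmul]
    apply hWT
    apply hVW
    show ((n • (⟨u, hH⟩ : H) : H) : G) ∈ V
    have : ((n • (⟨u, hH⟩ : H) : H) : G) = n • u := rfl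
    rw [this]
    exact hUV (AddSubgroup.nsmul_mem U hu n)
  obtain ⟨φ, hφH, hφU⟩ := extend_char H U χ hvan
  have hchar : IsChar τ φ := continuous_of_vanish_open τ htg φ U hUopen hφU
  have hchar' : IsChar τ' φ := hcomp1 φ hchar
  letI := TopologicalSpace.induced (Subtype.val : H → G) τ'
  have hval : Continuous (Subtype.val : H → G) := continuous_induced_dom
  have : Continuous (φ ∘ (Subtype.val : H → G)) := hchar'.comp hval
  have heq : (φ ∘ (Subtype.val : H → G)) = χ := funext fun h => hφH h
  rwa [heq] at this

theorem stmt13 {G : Type*} [AddCommGroup G] (hb : BoundedGroup G)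
    (τ τ' : TopologicalSpace G)
    (htg : @IsTopologicalAddGroup G τ _) (htg' : @IsTopologicalAddGroup G τ' _)
    (hlqc : LocallyQuasiConvex τ) (hlqc' : LocallyQuasiConvex τ')
    (hcomp : Compatible τ τ')
    (H : AddSubgroup G) (hopen : @IsOpen G τ (H : Set G)) :
    Compatible (TopologicalSpace.induced (Subtype.val : H → G) τ)
      (TopologicalSpace.induced (Subtype.val : H → G) τ') := by
  intro χ
  constructor
  · exact aux_dir hb τ τ' htg hlqc (fun φ h => (hcomp φ).mp h) H χ
  · exact aux_dir hb τ' τ htg' hlqc' (fun φ h => (hcomp φ).mpr h) H χ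
end
end

section
/- Let (m_n) be a non-decreasing sequence of natural numbers with m_n → ∞, G = ⊕_n ℤ/m_nℤ ⊆ ∏_n ℤ/m_nℤ identified with finitely supported sequences (k_n/m_n + ℤ) in ℝ/ℤ, and let e_n ∈ G^ be the n-th coordinate character. Let τ_c be the topology on G of uniform convergence on the set c = {±e_n : n ∈ ℕ} ∪ {0}, with neighborhood basis V_m = {x ∈ G : |x_n| ≤ 1/(4m) for all n} for m ∈ ℕ. Then the continuous characters of (G, τ_c) are exactly the elements of ⊕_n Hom(ℤ/m_nℤ, ℝ/ℤ): no character with infinite support is τ_c-continuous. -/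
open scoped Topology
open Filter

noncomputable section

variable {G : Type*}

/-- The neighborhood `V_M` of `0` for the topology of uniform convergence on the
coordinate characters: all coordinates `x_n = k_n/m_n` satisfy `|k_n/m_n| ≤ 1/(4M)`,
where `k_n ∈ (-m_n/2, m_n/2]` is the minimal-absolute-value representative. -/
def Vset (m : ℕ → ℕ) (M : ℕ) : Set (Π₀ n, ZMod (m n)) :=
  {x | ∀ n, (|(x n).valMinAbs| : ℝ) / (m n) ≤ 1 / (4 * M)}

lemma circle_rep (ξ : Circle1) (hξ : ξ ≠ 0) :
    ∃ x : ℝ, 0 < x ∧ x ≤ 1/2 ∧ ((x : Circle1) = ξ ∨ (x : Circle1) = -ξ) := by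
  obtain ⟨y, hy⟩ := QuotientAddGroup.mk'_surjective (AddSubgroup.zmultiples (1:ℝ)) ξ
  rw [QuotientAddGroup.mk'_apply] at hy
  set z : ℝ := y - round y with hzdef
  have hz : ((z : ℝ) : Circle1) = ξ := by
    rw [hzdef, ← hy]
    have h0 : (((round y : ℝ) : ℝ) : Circle1) = 0 :=
      (AddCircle.coe_eq_zero_iff 1).mpr ⟨round y, by simp⟩
    rw [show ((y - (round y:ℝ) : ℝ) : Circle1) = ((y:ℝ):Circle1) - (((round y:ℝ)):Circle1) from
      QuotientAddGroup.mk_sub _ _ _, h0, sub_zero]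
  have hz2 : |z| ≤ 1/2 := abs_sub_round y
  have hz0 : z ≠ 0 := fun h => hξ (by rw [← hz, h]; simp)
  rcases lt_or_gt_of_ne hz0 with hneg | hpos
  · refine ⟨-z, by linarith, by rw [abs_of_neg hneg] at hz2; linarith, Or.inr ?_⟩
    rw [← hz]
    exact QuotientAddGroup.mk_neg _ _
  · exact ⟨z, hpos, by rwa [abs_of_pos hpos] at hz2, Or.inl hz⟩


lemma key_lemma (M k : ℕ) (hM : 0 < M) (hk : 8 * M ≤ k) (ψ : ZMod k →+ Circle1)
    (hψ : ψ ≠ 0) : ∃ (a : ZMod k) (r : ℝ),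
      (|a.valMinAbs| : ℝ) / k ≤ 1 / (4 * M) ∧ 1 / (8 * M) ≤ r ∧ r ≤ 1 / 2 ∧ ψ a = (r : Circle1) := by
  haveI : NeZero k := ⟨by omega⟩
  have hMR : (0:ℝ) < M := by exact_mod_cast hM
  have hM1 : (1:ℝ) ≤ M := by exact_mod_cast hM
  have hkR : (8:ℝ) * M ≤ k := by exact_mod_cast hk
  have hkpos : (0:ℝ) < k := by exact_mod_cast (by omega : 0 < k)
  have hξ : ψ 1 ≠ 0 := by
    intro h
    apply hψ
    ext b
    have hb : b = b.val • (1 : ZMod k) := by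
      rw [nsmul_eq_mul, mul_one]
      exact (ZMod.natCast_rightInverse b).symm
    rw [hb, map_nsmul, h, smul_zero]
    rfl
  obtain ⟨x, hx0, hx2, hxe⟩ := circle_rep (ψ 1) hξ
  have hktor : (k : ℕ) • (ψ 1) = 0 := by
    rw [← map_nsmul, nsmul_eq_mul, mul_one, ZMod.natCast_self, map_zero]
  have hcoe_nsmul : ∀ (t : ℕ), ((t * x : ℝ) : Circle1) = t • ((x:ℝ) : Circle1) := by
    intro t
    rw [← nsmul_eq_mul]
    exact QuotientAddGroup.mk_nsmul _ _ _
  have hkx0 : ((k * x : ℝ) : Circle1) = 0 := by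
    rw [hcoe_nsmul k]
    rcases hxe with h | h
    · rw [h, hktor]
    · rw [h, smul_neg, hktor, neg_zero]
  obtain ⟨z, hz⟩ := (AddCircle.coe_eq_zero_iff 1).mp hkx0
  rw [zsmul_eq_mul, mul_one] at hz
  have hz1 : (1:ℤ) ≤ z := by
    rcases lt_or_ge 0 z with h | h
    · omega
    · exfalso
      have : (z:ℝ) ≤ 0 := by exact_mod_cast h
      nlinarith
  have hkx1 : (1:ℝ) ≤ k * x := by
    have : (1:ℝ) ≤ z := by exact_mod_cast hz1
    linarith [hz ▸ this]
  -- the multiple t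
  set t : ℕ := ⌈(1/(8*M))/x⌉₊ with htdef
  have htpos : 0 < t := Nat.ceil_pos.mpr (by positivity)
  have htx : 1/(8*(M:ℝ)) ≤ t * x := by
    have h := Nat.le_ceil ((1/(8*(M:ℝ)))/x)
    rw [← htdef] at h
    calc 1/(8*(M:ℝ)) = (1/(8*M))/x * x := (div_mul_cancel₀ _ (ne_of_gt hx0)).symm
    _ ≤ t * x := by nlinarith
  have htlt : (t:ℝ) < (1/(8*M))/x + 1 := by
    rw [htdef]
    exact Nat.ceil_lt_add_one (by positivity)
  have h8 : (1:ℝ) ≤ (k:ℝ)/(8*M) := by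
    rw [le_div_iff₀ (by positivity)]
    linarith
  have htk : (t:ℝ) ≤ (k:ℝ)/(4*M) := by
    have h1 : (1/(8*(M:ℝ)))/x ≤ (k:ℝ)/(8*M) := by
      rw [div_le_div_iff₀ hx0 (by positivity)]
      have he : (1/(8*(M:ℝ))) * (8*M) = 1 := by field_simp
      linarith
    have h2 : (k:ℝ)/(4*M) = (k:ℝ)/(8*M) + (k:ℝ)/(8*M) := by ring
    linarith
  have htx2 : (t:ℝ) * x ≤ 1/2 := by
    by_cases hc : x ≤ 1/(8*M)
    · have hfx : (1/(8*(M:ℝ))/x)*x = 1/(8*M) := div_mul_cancel₀ _ (ne_of_gt hx0)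
      have hmm : (t:ℝ)*x < 1/(8*M) + x := by nlinarith
      have h18 : 1/(8*(M:ℝ)) ≤ 1/8 := by
        rw [div_le_div_iff₀ (by positivity) (by norm_num)]
        linarith
      linarith
    · have ht1 : t = 1 := le_antisymm
        (Nat.ceil_le.mpr (by rw [Nat.cast_one, div_le_one hx0]; linarith)) htpos
      rw [ht1]
      rw [Nat.cast_one, one_mul]
      linarith
  have ht2 : t ≤ k / 2 := by
    have h4 : (t:ℝ)*4 ≤ k := by
      have : (k:ℝ)/(4*M) ≤ (k:ℝ)/4 := by
        rw [div_le_div_iff₀ (by positivity) (by norm_num)]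
        nlinarith
      nlinarith
    have : t * 4 ≤ k := by exact_mod_cast h4
    omega
  have hvm : ((t : ZMod k)).valMinAbs = (t:ℤ) := ZMod.valMinAbs_natCast_of_le_half ht2
  have hbound : (t:ℝ)/k ≤ 1/(4*M) := by
    rw [div_le_div_iff₀ hkpos (by positivity)]
    have h1 : (k:ℝ)/(4*M)*(4*M) = k := div_mul_cancel₀ _ (by positivity)
    have h2 := mul_le_mul_of_nonneg_right htk (by positivity : (0:ℝ) ≤ 4*M)
    linarith
  have hψt : ψ ((t : ZMod k)) = t • ψ 1 := by
    have h1 : ((t:ℕ) : ZMod k) = t • (1 : ZMod k) := by rw [nsmul_eq_mul, mul_one]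
    rw [h1, map_nsmul]
  rcases hxe with h | h
  · refine ⟨(t : ZMod k), t*x, ?_, htx, htx2, ?_⟩
    · have habs : (|((t : ZMod k)).valMinAbs| : ℝ) = t := by
        rw [hvm]
        push_cast
        exact abs_of_nonneg (by positivity)
      rw [habs]
      exact hbound
    · rw [hψt, ← h, ← hcoe_nsmul t]
  · refine ⟨-(t : ZMod k), t*x, ?_, htx, htx2, ?_⟩
    · have hna : (-(t:ZMod k)).valMinAbs.natAbs = t := by
        rw [ZMod.natAbs_valMinAbs_neg, hvm]
        exact Int.natAbs_natCast t
      have habs : (|(-(t : ZMod k)).valMinAbs| : ℝ) = t := by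
        rw [← Int.cast_abs, Int.abs_eq_natAbs, hna]
        push_cast
        ring
      rw [habs]
      exact hbound
    · rw [map_neg, hψt, ← smul_neg, ← h, ← hcoe_nsmul t]

lemma subset_sum_lemma (T : Finset ℕ) (r : ℕ → ℝ)
    (hr : ∀ n ∈ T, 0 ≤ r n ∧ r n < 1/8) (hsum : 1/8 ≤ ∑ n ∈ T, r n) :
    ∃ U ⊆ T, 1/8 ≤ ∑ n ∈ U, r n ∧ ∑ n ∈ U, r n ≤ 1/2 := by
  induction T using Finset.strongInduction with
  | _ T ih =>
    by_cases hle : ∑ n ∈ T, r n ≤ 1/2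
    · exact ⟨T, le_refl _, hsum, hle⟩
    · have hne : T.Nonempty := by
        by_contra h
        rw [Finset.not_nonempty_iff_eq_empty] at h
        rw [h, Finset.sum_empty] at hle
        norm_num at hle
      obtain ⟨u, hu⟩ := hne
      have hss : T.erase u ⊂ T := Finset.erase_ssubset hu
      have hes : ∑ n ∈ T.erase u, r n = (∑ n ∈ T, r n) - r u :=
        Finset.sum_erase_eq_sub hu
      have hru := hr u hu
      obtain ⟨U, hU, h1, h2⟩ := ih _ hss
        (fun n hn => hr n (Finset.mem_of_mem_erase hn))
        (by rw [hes]; linarith)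
      exact ⟨U, hU.trans (Finset.erase_subset _ _), h1, h2⟩

theorem stmt15 (m : ℕ → ℕ) (hpos : ∀ n, 0 < m n) (hmono : Monotone m)
    (hten : Filter.Tendsto m Filter.atTop Filter.atTop)
    (τc : TopologicalSpace (Π₀ n, ZMod (m n)))
    (htg : @IsTopologicalAddGroup (Π₀ n, ZMod (m n)) τc _)
    (hbasis : (@nhds (Π₀ n, ZMod (m n)) τc 0).HasBasis (fun M : ℕ => 0 < M) (Vset m))
    (χ : ∀ n, ZMod (m n) →+ Circle1) :
    @Continuous (Π₀ n, ZMod (m n)) Circle1 τc _ (DFinsupp.sumAddHom χ) ↔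
      {n | χ n ≠ 0}.Finite := by
  letI := τc
  constructor
  · -- continuous → finite support
    intro hcont
    by_contra hinf
    rw [← Set.not_infinite, not_not] at hinf
    have hpre : (DFinsupp.sumAddHom χ) ⁻¹' Metric.ball (0:Circle1) (1/8) ∈
        @nhds (Π₀ n, ZMod (m n)) τc 0 := by
      have h := hcont.continuousAt (x := (0 : Π₀ n, ZMod (m n)))
      rw [ContinuousAt, map_zero] at h
      exact h (Metric.ball_mem_nhds _ (by norm_num))
    obtain ⟨M, hM, hsub⟩ := hbasis.mem_iff.mp hpre
    obtain ⟨N, hN⟩ := Filter.eventually_atTop.mp (hten.eventually_ge_atTop (8*M))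
    have hinf2 : ({n | χ n ≠ 0} \ Set.Iio N).Infinite := hinf.diff (Set.finite_Iio N)
    obtain ⟨T, hTsub, hTcard⟩ := hinf2.exists_subset_card_eq M
    have hT : ∀ n ∈ T, χ n ≠ 0 ∧ 8 * M ≤ m n := by
      intro n hn
      have h := hTsub hn
      exact ⟨h.1, hN n (not_lt.mp h.2)⟩
    have hsel : ∀ n ∈ T, ∃ (a : ZMod (m n)) (r : ℝ),
        (|a.valMinAbs| : ℝ) / (m n) ≤ 1 / (4 * M) ∧ 1 / (8 * M) ≤ r ∧ r ≤ 1 / 2 ∧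
        χ n a = (r : Circle1) :=
      fun n hn => key_lemma M (m n) hM (hT n hn).2 (χ n) (hT n hn).1
    choose! a r h1 h2 h3 h4 using hsel
    have hMR : (0:ℝ) < M := by exact_mod_cast hM
    -- find U ⊆ T with partial sum in [1/8, 1/2]
    obtain ⟨U, hUsub, hUlo, hUhi⟩ :
        ∃ U ⊆ T, 1/8 ≤ ∑ n ∈ U, r n ∧ ∑ n ∈ U, r n ≤ 1/2 := by
      by_cases hbig : ∃ n ∈ T, 1/8 ≤ r n
      · obtain ⟨n0, hn0, hrn0⟩ := hbig
        refine ⟨{n0}, Finset.singleton_subset_iff.mpr hn0, ?_, ?_⟩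
        · rw [Finset.sum_singleton]; exact hrn0
        · rw [Finset.sum_singleton]; exact h3 n0 hn0
      · push_neg at hbig
        apply subset_sum_lemma T r
        · intro n hn
          exact ⟨le_trans (by positivity) (h2 n hn), hbig n hn⟩
        · have hcard := Finset.card_nsmul_le_sum T r (1/(8*(M:ℝ)))
            (fun n hn => h2 n hn)
          rw [hTcard] at hcard
          have : (M:ℝ) * (1/(8*M)) = 1/8 := by field_simp
          rw [nsmul_eq_mul] at hcard
          linarith
    set x : Π₀ n, ZMod (m n) := ∑ n ∈ U, DFinsupp.single n (a n) with hxdef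
    have hxapp : ∀ n', x n' = if h : n' ∈ U then a n' else 0 := by
      intro n'
      rw [hxdef, DFinsupp.finset_sum_apply]
      by_cases h : n' ∈ U
      · rw [dif_pos h]
        refine (Finset.sum_eq_single_of_mem n' h ?_).trans DFinsupp.single_eq_same
        intro b _ hbn
        exact DFinsupp.single_eq_of_ne (Ne.symm hbn)
      · rw [dif_neg h]
        apply Finset.sum_eq_zero
        intro b hb
        exact DFinsupp.single_eq_of_ne (fun hc => h (hc ▸ hb))
    have hxV : x ∈ Vset m M := by
      intro n'
      by_cases h : n' ∈ U
      · have hx := hxapp n'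
        rw [dif_pos h] at hx
        rw [hx]
        exact h1 n' (hUsub h)
      · have hx := hxapp n'
        rw [dif_neg h] at hx
        rw [hx, ZMod.valMinAbs_zero]
        simp only [abs_zero, Int.cast_zero, zero_div]
        positivity
    have hφx : DFinsupp.sumAddHom χ x = ((∑ n ∈ U, r n : ℝ) : Circle1) := by
      rw [hxdef, map_sum]
      rw [Finset.sum_congr rfl
        (fun n hn => by rw [DFinsupp.sumAddHom_single, h4 n (hUsub hn)])]
      symm
      simpa using map_sum (QuotientAddGroup.mk' (AddSubgroup.zmultiples (1:ℝ))) r U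
    have hin := hsub hxV
    rw [Set.mem_preimage, Metric.mem_ball, dist_zero_right, hφx] at hin
    have hnorm : ‖((∑ n ∈ U, r n : ℝ) : Circle1)‖ = |∑ n ∈ U, r n| := by
      apply (AddCircle.norm_coe_eq_abs_iff 1 one_ne_zero).mpr
      rw [abs_one, abs_of_nonneg (by linarith)]
      linarith
    rw [hnorm, abs_of_nonneg (by linarith)] at hin
    linarith
  · -- finite support → continuous
    intro hfin
    apply continuous_of_continuousAt_zero (DFinsupp.sumAddHom χ)
    unfold ContinuousAt
    rw [map_zero, hbasis.tendsto_left_iff]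
    intro t ht
    set s : ℕ := hfin.toFinset.sup m with hsdef
    refine ⟨s + 1, Nat.succ_pos _, fun x hx => ?_⟩
    have hx0 : DFinsupp.sumAddHom χ x = 0 := by
      rw [DFinsupp.sumAddHom_apply, DFinsupp.sum]
      apply Finset.sum_eq_zero
      intro i _
      by_cases hc : χ i = 0
      · rw [hc]; rfl
      · have him : i ∈ hfin.toFinset := hfin.mem_toFinset.mpr hc
        have hmi : m i ≤ s := Finset.le_sup him
        have hxi : x i = 0 := by
          by_contra hne
          have hv0 : (x i).valMinAbs ≠ 0 := fun h => hne ((ZMod.valMinAbs_eq_zero _).mp h)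
          have h1 : (1:ℤ) ≤ |(x i).valMinAbs| := Int.one_le_abs hv0
          have h1R : (1:ℝ) ≤ |((x i).valMinAbs : ℝ)| := by
            rw [← Int.cast_abs]
            exact_mod_cast h1
          have hb := hx i
          have hmpos : (0:ℝ) < m i := by exact_mod_cast hpos i
          have hsR : (m i : ℝ) ≤ s := by exact_mod_cast hmi
          rw [div_le_div_iff₀ hmpos (by positivity)] at hb
          push_cast at hb
          have hs0 : (0:ℝ) ≤ s := by positivity
          nlinarith [mul_le_mul_of_nonneg_right h1R (show (0:ℝ) ≤ 4*((s:ℝ)+1) by positivity)]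
        rw [hxi, map_zero]
    rw [hx0]
    exact mem_of_mem_nhds ht
end
end
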